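/- Let G=(V,E_L,E_R) and G'=(V',E'_L,E'_R) be achievement positional games with V∩V'=∅ such that Left has a winning strategy on G as first player and Right has a winning strategy on G' as first player. Let d be the Left-delay of G and d' the Right-delay of G'. If d ≤ d', then Left has a winning strategy on G∪G' as first player; if d' ≤ d, then Right has a winning strategy on G∪G' as first player. -/

import Mathlib

namespace APG

/-- The two players: Left and Right. -/
inductive Player : Type
  | L : Player
  | R : Player
deriving DecidableEq, Repr

/-- The opponent of a player. -/
def Player.other : Player → Player
  | .L => .R
  | .R => .L

/-- An achievement positional game: a finite vertex set together with the set of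
blue edges (Left's winning sets) and the set of red edges (Right's winning sets). -/
structure Game : Type where
  V : Finset ℕ
  EL : Finset (Finset ℕ)
  ER : Finset (Finset ℕ)

/-- The edges are nonempty subsets of the vertex set. -/
def WellFormed (G : Game) : Prop :=
  (∀ e ∈ G.EL, e ⊆ G.V ∧ e.Nonempty) ∧ (∀ e ∈ G.ER, e ⊆ G.V ∧ e.Nonempty)

/-- The winning sets of a given player. -/
def Game.edges (G : Game) : Player → Finset (Finset ℕ)
  | .L => G.EL
  | .R => G.ER

/-- The player who makes the `i`-th move (0-indexed) when `s` moves first. -/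
def mover (s : Player) (i : ℕ) : Player := if i % 2 = 0 then s else s.other

/-- The set of vertices picked by player `p` along the history `h`
(the chronological list of the moves played so far), when `s` moved first. -/
def picked (s p : Player) (h : List ℕ) : Finset ℕ :=
  ((Finset.range h.length).filter fun i => mover s i = p).image fun i => h.getD i 0

/-- The set `S` of picked vertices fills some edge of `E`. -/
def fills (E : Finset (Finset ℕ)) (S : Finset ℕ) : Prop := ∃ e ∈ E, e ⊆ S

/-- The game is over: some player has picked all the vertices of one of their edges. -/
def ended (G : Game) (s : Player) (h : List ℕ) : Prop :=
  fills G.EL (picked s .L h) ∨ fills G.ER (picked s .R h)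

/-- `h` is a legal history: no vertex is picked twice, every picked vertex belongs to
the board, and no move is made after the game has ended. -/
def ValidHist (G : Game) (s : Player) (h : List ℕ) : Prop :=
  h.Nodup ∧ (∀ x ∈ h, x ∈ G.V) ∧ ∀ k, k < h.length → ¬ ended G s (h.take k)

/-- A strategy: a map assigning to each position (history) a vertex to pick. -/
abbrev Strategy := List ℕ → ℕ

/-- Along `h`, every move of player `p` agrees with the strategy `σ`. -/
def Follows (s p : Player) (σ : Strategy) (h : List ℕ) : Prop :=
  ∀ k, k < h.length → mover s k = p → h.getD k 0 = σ (h.take k)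

/-- A finished play: either the game has ended or all vertices have been picked. -/
def Complete (G : Game) (s : Player) (h : List ℕ) : Prop :=
  ended G s h ∨ h.length = G.V.card

/-- The strategy `σ` of player `p` always suggests a legal move (an unpicked vertex)
whenever the game is not over and it is `p`'s turn. -/
def Legal (G : Game) (s p : Player) (σ : Strategy) : Prop :=
  ∀ h, ValidHist G s h → Follows s p σ h → ¬ ended G s h → h.length < G.V.card →
    mover s h.length = p → σ h ∈ G.V ∧ σ h ∉ h

/-- Player `p` has a winning strategy on `G` when `s` moves first: following it,
every finished play ends with `p` having filled one of their edges (and, the game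
having ended right there, the opponent has not filled an edge first). -/
def WinsAs (G : Game) (s p : Player) : Prop :=
  ∃ σ : Strategy, Legal G s p σ ∧
    ∀ h, ValidHist G s h → Follows s p σ h → Complete G s h →
      fills (G.edges p) (picked s p h)

/-- Player `p` has a non-losing strategy on `G` when `s` moves first: following it,
the opponent never fills one of their edges. -/
def NonLosingAs (G : Game) (s p : Player) : Prop :=
  ∃ σ : Strategy, Legal G s p σ ∧
    ∀ h, ValidHist G s h → Follows s p σ h → Complete G s h →
      ¬ fills (G.edges p.other) (picked s p.other h)

/-- The possible results of the game, for a fixed starting player. -/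
inductive Result : Type
  | Lwin : Result
  | draw : Result
  | Rwin : Result
deriving DecidableEq, Repr

/-- The result of `G` with optimal play, when `s` moves first, is `r`:
a win for a player means that player has a winning strategy, a draw means
both players have non-losing strategies. -/
def resultIs (G : Game) (s : Player) : Result → Prop
  | .Lwin => WinsAs G s .L
  | .Rwin => WinsAs G s .R
  | .draw => NonLosingAs G s .L ∧ NonLosingAs G s .R

/-- An outcome: the pair of results with optimal play
(when Left starts, when Right starts). -/
abbrev Outcome := Result × Result

/-- `G` has outcome `o`. -/
def hasOutcome (G : Game) (o : Outcome) : Prop :=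
  resultIs G .L o.1 ∧ resultIs G .R o.2

/-- Numerical value of a result, from Left's point of view:
Right wins < draw < Left wins. -/
def Result.val : Result → ℕ
  | .Rwin => 0
  | .draw => 1
  | .Lwin => 2

/-- The partial order `≤_L` on outcomes, comparing both components simultaneously
from Left's point of view. -/
def outLE (o o' : Outcome) : Prop := o.1.val ≤ o'.1.val ∧ o.2.val ≤ o'.2.val

def oL : Outcome := (.Lwin, .Lwin)
def oLminus : Outcome := (.Lwin, .draw)
def oN : Outcome := (.Lwin, .Rwin)
def oD : Outcome := (.draw, .draw)
def oRminus : Outcome := (.draw, .Rwin)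
def oR : Outcome := (.Rwin, .Rwin)

/-- The updated game `G_u` after Left has picked `u`. -/
def subL (G : Game) (u : ℕ) : Game where
  V := G.V.erase u
  EL := G.EL.image fun e => e.erase u
  ER := G.ER.filter fun e => u ∉ e

/-- The updated game `G^u` after Right has picked `u`. -/
def subR (G : Game) (u : ℕ) : Game where
  V := G.V.erase u
  EL := G.EL.filter fun e => u ∉ e
  ER := G.ER.image fun e => e.erase u

/-- The updated game `G_u^v` after Left has picked `u` and Right has picked `v`. -/
def updLR (G : Game) (u v : ℕ) : Game where
  V := (G.V.erase u).erase v
  EL := (G.EL.filter fun e => v ∉ e).image fun e => e.erase u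
  ER := (G.ER.filter fun e => u ∉ e).image fun e => e.erase v

/-- The disjoint union of two games. -/
def gunion (G G' : Game) : Game where
  V := G.V ∪ G'.V
  EL := G.EL ∪ G'.EL
  ER := G.ER ∪ G'.ER

/-! ### The scoring games `sc_L` and `sc_R` and the associated delays

In the scoring game `sc_p(G)`, player `p` moves first and must always pick a vertex,
while the opponent may, on each of their turns, either pick a vertex or pass (`none`).
The game ends when `p` fills one of their edges, the opponent fills one of theirs, or
all vertices have been picked. The score is the number of the opponent's pass moves
if `p` has filled one of their edges, and `+∞` otherwise; `p` minimizes the score and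
the opponent maximizes it. -/

/-- A history of the scoring game: `none` stands for a pass move. -/
abbrev SHist := List (Option ℕ)

/-- The list of vertices actually picked along a scoring history. -/
def allPicks (h : SHist) : List ℕ := h.filterMap id

/-- The set of vertices picked by player `q` along the scoring history `h`,
in the scoring game where `p` moves first. -/
def spicked (p q : Player) (h : SHist) : Finset ℕ :=
  (((h.zipIdx.map Prod.swap).filter fun ix => decide (mover p ix.1 = q)).filterMap Prod.snd).toFinset

/-- The number of pass moves made by `p`'s opponent along `h`. -/
def passCount (p : Player) (h : SHist) : ℕ :=
  ((h.zipIdx.map Prod.swap).filter fun ix => decide (mover p ix.1 = p.other ∧ ix.2 = none)).length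

/-- The scoring game is over: `p` has filled one of their edges, the opponent has filled
one of theirs, or all vertices have been picked. -/
def sEnded (G : Game) (p : Player) (h : SHist) : Prop :=
  fills (G.edges p) (spicked p p h) ∨ fills (G.edges p.other) (spicked p p.other h) ∨
    G.V ⊆ (allPicks h).toFinset

/-- `h` is a legal history of the scoring game `sc_p(G)`: no vertex is picked twice,
picked vertices belong to the board, `p` never passes, and no move is made after
the game has ended. -/
def sValid (G : Game) (p : Player) (h : SHist) : Prop :=
  (allPicks h).Nodup ∧ (∀ x ∈ allPicks h, x ∈ G.V) ∧
    (∀ k, k < h.length → mover p k = p → h.getD k none ≠ none) ∧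
    (∀ k, k < h.length → ¬ sEnded G p (h.take k))

/-- Along `h`, every move of player `p` agrees with the strategy `σ`. -/
def sFollows (p : Player) (σ : SHist → ℕ) (h : SHist) : Prop :=
  ∀ k, k < h.length → mover p k = p → h.getD k none = some (σ (h.take k))

/-- The strategy `σ` of player `p` in the scoring game always suggests a legal move. -/
def sLegal (G : Game) (p : Player) (σ : SHist → ℕ) : Prop :=
  ∀ h, sValid G p h → sFollows p σ h → ¬ sEnded G p h → mover p h.length = p →
    σ h ∈ G.V ∧ σ h ∉ allPicks h

/-- Player `p` can ensure a score at most `n` in the scoring game `sc_p(G)`: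
they have a strategy guaranteeing that every finished play ends with `p` having
filled one of their edges with the opponent having passed at most `n` times. -/
def canEnsure (G : Game) (p : Player) (n : ℕ) : Prop :=
  ∃ σ : SHist → ℕ, sLegal G p σ ∧
    ∀ h, sValid G p h → sFollows p σ h → sEnded G p h →
      fills (G.edges p) (spicked p p h) ∧ passCount p h ≤ n

/-- The delay of `G` for player `p`: the optimal score of the scoring game `sc_p(G)`,
i.e. the least `n` such that `p` can ensure a score at most `n`. For `p = Left` this is
the Left-delay of `G`, for `p = Right` the Right-delay. -/
noncomputable def delay (G : Game) (p : Player) : ℕ := sInf {n : ℕ | canEnsure G p n}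

section AuxBasic

@[simp] lemma Player.other_other (p : Player) : p.other.other = p := by cases p <;> rfl

lemma Player.other_ne (p : Player) : p.other ≠ p := by cases p <;> simp [Player.other]

lemma Player.ne_other (p : Player) : p ≠ p.other := by cases p <;> simp [Player.other]

lemma Player.eq_or_eq_other (q p : Player) : q = p ∨ q = p.other := by
  cases p <;> cases q <;> simp [Player.other]

lemma mover_eq_self_iff (s : Player) (k : ℕ) : mover s k = s ↔ k % 2 = 0 := by
  unfold mover
  rcases Nat.mod_two_eq_zero_or_one k with h | h <;> simp [h]
  exact Player.other_ne s

lemma mover_eq_other_iff (s : Player) (k : ℕ) : mover s k = s.other ↔ k % 2 = 1 := by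
  unfold mover
  rcases Nat.mod_two_eq_zero_or_one k with h | h <;> simp [h]
  exact Player.ne_other s

lemma mover_self (s : Player) {k : ℕ} (hk : k % 2 = 0) : mover s k = s := by
  simp [mover, hk]

lemma mover_other (s : Player) {k : ℕ} (hk : k % 2 = 1) : mover s k = s.other := by
  simp [mover, hk]

lemma fills_mono {E E' : Finset (Finset ℕ)} {S S' : Finset ℕ}
    (hE : E ⊆ E') (hS : S ⊆ S') (h : fills E S) : fills E' S' := by
  obtain ⟨e, he, hsub⟩ := h
  exact ⟨e, hE he, hsub.trans hS⟩

lemma getD_concat_lt {α : Type*} (l : List α) (x d : α) {i : ℕ} (h : i < l.length) :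
    (l ++ [x]).getD i d = l.getD i d :=
  List.getD_append _ _ _ _ h

lemma getD_concat_len {α : Type*} (l : List α) (x d : α) :
    (l ++ [x]).getD l.length d = x := by
  simp [List.getD, List.getElem?_append_right (le_refl l.length)]

/-! ### picked and histories -/

lemma mem_picked {s q : Player} {h : List ℕ} {y : ℕ} :
    y ∈ picked s q h ↔ ∃ i, i < h.length ∧ mover s i = q ∧ h.getD i 0 = y := by
  unfold picked
  simp only [Finset.mem_image, Finset.mem_filter, Finset.mem_range]
  constructor
  · rintro ⟨i, ⟨h1, h2⟩, h3⟩; exact ⟨i, h1, h2, h3⟩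
  · rintro ⟨i, h1, h2, h3⟩; exact ⟨i, ⟨h1, h2⟩, h3⟩

lemma picked_snoc (s q : Player) (h : List ℕ) (x : ℕ) :
    picked s q (h ++ [x]) =
      if mover s h.length = q then insert x (picked s q h) else picked s q h := by
  ext y
  by_cases hm : mover s h.length = q
  · rw [if_pos hm]
    simp only [mem_picked, Finset.mem_insert, List.length_append, List.length_singleton]
    constructor
    · rintro ⟨i, hi, hmi, hyi⟩
      rcases Nat.lt_succ_iff_lt_or_eq.mp hi with hlt | rfl
      · right; exact ⟨i, hlt, hmi, by rwa [getD_concat_lt _ _ _ hlt] at hyi⟩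
      · left; rw [← hyi, getD_concat_len]
    · rintro (rfl | ⟨i, hlt, hmi, hyi⟩)
      · exact ⟨h.length, by omega, hm, getD_concat_len _ _ _⟩
      · exact ⟨i, by omega, hmi, by rwa [getD_concat_lt _ _ _ hlt]⟩
  · rw [if_neg hm]
    simp only [mem_picked, List.length_append, List.length_singleton]
    constructor
    · rintro ⟨i, hi, hmi, hyi⟩
      rcases Nat.lt_succ_iff_lt_or_eq.mp hi with hlt | rfl
      · exact ⟨i, hlt, hmi, by rwa [getD_concat_lt _ _ _ hlt] at hyi⟩
      · exact absurd hmi hm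
    · rintro ⟨i, hlt, hmi, hyi⟩
      exact ⟨i, by omega, hmi, by rwa [getD_concat_lt _ _ _ hlt]⟩

lemma picked_subset (s q : Player) (h : List ℕ) : picked s q h ⊆ h.toFinset := by
  intro y hy
  rw [mem_picked] at hy
  obtain ⟨i, hi, -, hyi⟩ := hy
  rw [List.mem_toFinset, ← hyi, List.getD_eq_getElem?_getD,
    List.getElem?_eq_getElem hi, Option.getD_some]
  exact List.getElem_mem _

lemma toFinset_eq_picked_union (s : Player) (h : List ℕ) :
    h.toFinset = picked s .L h ∪ picked s .R h := by
  induction h using List.reverseRecOn with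
  | nil => simp [picked]
  | append_singleton h x ih =>
    rw [picked_snoc, picked_snoc, List.toFinset_append, ih]
    have hLR : mover s h.length = .L ∨ mover s h.length = .R := by
      cases mover s h.length <;> simp
    rcases hLR with hm | hm <;> rw [hm] <;>
      · ext y
        simp only [List.toFinset_cons, List.toFinset_nil, LawfulSingleton.insert_empty_eq, Finset.mem_union,
          Finset.mem_insert, Finset.mem_singleton, if_pos, if_neg, reduceCtorEq, ite_true,
          ite_false]
        tauto

lemma Follows_snoc (s p : Player) (σ : Strategy) (h : List ℕ) (x : ℕ) :
    Follows s p σ (h ++ [x]) ↔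
      Follows s p σ h ∧ (mover s h.length = p → x = σ h) := by
  unfold Follows
  constructor
  · intro H
    constructor
    · intro k hk hm
      have := H k (by simp; omega) hm
      rwa [getD_concat_lt _ _ _ hk, List.take_append_of_le_length (le_of_lt hk)] at this
    · intro hm
      have := H h.length (by simp) hm
      rwa [getD_concat_len, List.take_append_of_le_length (le_refl h.length),
        List.take_length] at this
  · rintro ⟨H1, H2⟩ k hk hm
    simp only [List.length_append, List.length_singleton] at hk
    rcases Nat.lt_succ_iff_lt_or_eq.mp hk with hlt | rfl
    · rw [getD_concat_lt _ _ _ hlt, List.take_append_of_le_length (le_of_lt hlt)]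
      exact H1 k hlt hm
    · rw [getD_concat_len, List.take_append_of_le_length (le_refl h.length), List.take_length]
      exact H2 hm

lemma ValidHist_snoc (G : Game) (s : Player) (h : List ℕ) (x : ℕ) :
    ValidHist G s (h ++ [x]) ↔
      ValidHist G s h ∧ x ∉ h ∧ x ∈ G.V ∧ ¬ ended G s h := by
  unfold ValidHist
  constructor
  · rintro ⟨hnd, hmem, hend⟩
    have hnd' := List.nodup_append.mp hnd
    refine ⟨⟨hnd'.1, fun y hy => hmem y (by simp [hy]), ?_⟩, ?_, hmem x (by simp), ?_⟩
    · intro k hk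
      have := hend k (by simp; omega)
      rwa [List.take_append_of_le_length (le_of_lt hk)] at this
    · intro hx
      exact hnd'.2.2 x hx x (by simp) rfl
    · have := hend h.length (by simp)
      rwa [List.take_append_of_le_length (le_refl h.length), List.take_length] at this
  · rintro ⟨⟨hnd, hmem, hend⟩, hxh, hxV, hne⟩
    refine ⟨?_, ?_, ?_⟩
    · rw [List.nodup_append]
      refine ⟨hnd, List.nodup_singleton x, ?_⟩
      intro a ha b hb hab
      rw [List.mem_singleton] at hb
      apply hxh
      rw [← hb, ← hab]
      exact ha
    · intro y hy
      rcases List.mem_append.mp hy with hy | hy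
      · exact hmem y hy
      · simp at hy; subst hy; exact hxV
    · intro k hk
      simp only [List.length_append, List.length_singleton] at hk
      rcases Nat.lt_succ_iff_lt_or_eq.mp hk with hlt | rfl
      · rw [List.take_append_of_le_length (le_of_lt hlt)]
        exact hend k hlt
      · rwa [List.take_append_of_le_length (le_refl h.length), List.take_length]

lemma ValidHist_prefix (G : Game) (s : Player) {h2 : List ℕ} (h1 : List ℕ)
    (hpre : h1 <+: h2) (hv : ValidHist G s h2) : ValidHist G s h1 := by
  obtain ⟨t, rfl⟩ := hpre
  obtain ⟨hnd, hmem, hend⟩ := hv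
  refine ⟨(List.nodup_append.mp hnd).1, fun y hy => hmem y (by simp [hy]), ?_⟩
  intro k hk
  have := hend k (by simp; omega)
  rwa [List.take_append_of_le_length (le_of_lt hk)] at this

lemma Follows_prefix (s p : Player) (σ : Strategy) {h2 : List ℕ} (h1 : List ℕ)
    (hpre : h1 <+: h2) (hf : Follows s p σ h2) : Follows s p σ h1 := by
  obtain ⟨t, rfl⟩ := hpre
  intro k hk hm
  have := hf k (by simp; omega) hm
  rwa [List.getD_append _ _ _ _ hk, List.take_append_of_le_length (le_of_lt hk)] at this

lemma picked_mono (s q : Player) {h1 h2 : List ℕ} (hpre : h1 <+: h2) :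
    picked s q h1 ⊆ picked s q h2 := by
  obtain ⟨t, rfl⟩ := hpre
  induction t using List.reverseRecOn with
  | nil => simp
  | append_singleton t x ih =>
    rw [← List.append_assoc, picked_snoc]
    split
    · exact ih.trans (Finset.subset_insert _ _)
    · exact ih

lemma ended_mono (G : Game) (s : Player) {h1 h2 : List ℕ} (hpre : h1 <+: h2)
    (he : ended G s h1) : ended G s h2 := by
  rcases he with he | he
  · exact Or.inl (fills_mono (le_refl _) (picked_mono s .L hpre) he)
  · exact Or.inr (fills_mono (le_refl _) (picked_mono s .R hpre) he)

lemma ended_iff_player (G : Game) (s p : Player) (h : List ℕ) :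
    ended G s h ↔
      fills (G.edges p) (picked s p h) ∨ fills (G.edges p.other) (picked s p.other h) := by
  cases p <;> simp [ended, Game.edges, Player.other] <;> tauto

end AuxBasic

section AuxScore

lemma allPicks_snoc (h : SHist) (a : Option ℕ) :
    allPicks (h ++ [a]) = allPicks h ++ a.toList := by
  unfold allPicks
  rw [List.filterMap_append]
  cases a <;> rfl

lemma enum_snoc {α : Type*} (h : List α) (a : α) :
    ((h ++ [a]).zipIdx.map Prod.swap) = (h.zipIdx.map Prod.swap) ++ [(h.length, a)] := by
  simp [List.zipIdx_append]

lemma mem_enum_iff_getElem? {α : Type*} {l : List α} {x : ℕ × α} :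
    x ∈ (l.zipIdx.map Prod.swap) ↔ l[x.1]? = some x.2 := by
  constructor
  · intro hx
    obtain ⟨⟨a, i⟩, hm, rfl⟩ := List.mem_map.mp hx
    exact List.mem_zipIdx_iff_getElem?.mp hm
  · intro h
    exact List.mem_map.mpr ⟨(x.2, x.1), List.mem_zipIdx_iff_getElem?.mpr h, rfl⟩

lemma mem_spicked {p q : Player} {h : SHist} {y : ℕ} :
    y ∈ spicked p q h ↔ ∃ i, i < h.length ∧ mover p i = q ∧ h.getD i none = some y := by
  unfold spicked
  rw [List.mem_toFinset, List.mem_filterMap]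
  constructor
  · rintro ⟨⟨i, a⟩, hmem, hsnd⟩
    rw [List.mem_filter] at hmem
    obtain ⟨henum, hdec⟩ := hmem
    rw [mem_enum_iff_getElem?] at henum
    have hlt : i < h.length := by
      by_contra hge
      rw [List.getElem?_eq_none (le_of_not_gt hge)] at henum
      cases henum
    simp only [decide_eq_true_eq] at hdec
    refine ⟨i, hlt, hdec, ?_⟩
    simp only at hsnd
    rw [List.getD_eq_getElem?_getD, henum, Option.getD_some, hsnd]
  · rintro ⟨i, hlt, hm, hget⟩
    refine ⟨(i, some y), ?_, rfl⟩
    rw [List.mem_filter]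
    rw [List.getD_eq_getElem?_getD, List.getElem?_eq_getElem hlt, Option.getD_some] at hget
    constructor
    · rw [mem_enum_iff_getElem?]
      rw [List.getElem?_eq_getElem hlt, hget]
    · simpa using hm

lemma spicked_snoc_none (p q : Player) (h : SHist) :
    spicked p q (h ++ [none]) = spicked p q h := by
  ext y
  simp only [mem_spicked, List.length_append, List.length_singleton]
  constructor
  · rintro ⟨i, hi, hm, hget⟩
    rcases Nat.lt_succ_iff_lt_or_eq.mp hi with hlt | rfl
    · exact ⟨i, hlt, hm, by rwa [getD_concat_lt _ _ _ hlt] at hget⟩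
    · rw [getD_concat_len] at hget; cases hget
  · rintro ⟨i, hlt, hm, hget⟩
    exact ⟨i, by omega, hm, by rwa [getD_concat_lt _ _ _ hlt]⟩

lemma spicked_snoc_some (p q : Player) (h : SHist) (x : ℕ) (hm : mover p h.length = q) :
    spicked p q (h ++ [some x]) = insert x (spicked p q h) := by
  ext y
  simp only [mem_spicked, List.length_append, List.length_singleton, Finset.mem_insert]
  constructor
  · rintro ⟨i, hi, hmi, hget⟩
    rcases Nat.lt_succ_iff_lt_or_eq.mp hi with hlt | rfl
    · exact Or.inr ⟨i, hlt, hmi, by rwa [getD_concat_lt _ _ _ hlt] at hget⟩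
    · rw [getD_concat_len] at hget
      exact Or.inl (Option.some_injective _ hget).symm
  · rintro (rfl | ⟨i, hlt, hmi, hget⟩)
    · exact ⟨h.length, by omega, hm, by rw [getD_concat_len]⟩
    · exact ⟨i, by omega, hmi, by rwa [getD_concat_lt _ _ _ hlt]⟩

lemma spicked_snoc_not_mover (p q : Player) (h : SHist) (a : Option ℕ)
    (hm : mover p h.length ≠ q) : spicked p q (h ++ [a]) = spicked p q h := by
  ext y
  simp only [mem_spicked, List.length_append, List.length_singleton]
  constructor
  · rintro ⟨i, hi, hmi, hget⟩
    rcases Nat.lt_succ_iff_lt_or_eq.mp hi with hlt | rfl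
    · exact ⟨i, hlt, hmi, by rwa [getD_concat_lt _ _ _ hlt] at hget⟩
    · exact absurd hmi hm
  · rintro ⟨i, hlt, hmi, hget⟩
    exact ⟨i, by omega, hmi, by rwa [getD_concat_lt _ _ _ hlt]⟩

lemma spicked_subset (p q : Player) (h : SHist) :
    spicked p q h ⊆ (allPicks h).toFinset := by
  intro y hy
  rw [mem_spicked] at hy
  obtain ⟨i, hi, -, hget⟩ := hy
  rw [List.mem_toFinset]
  unfold allPicks
  rw [List.mem_filterMap]
  refine ⟨some y, ?_, rfl⟩
  rw [List.getD_eq_getElem?_getD, List.getElem?_eq_getElem hi, Option.getD_some] at hget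
  rw [← hget]
  exact List.getElem_mem _

lemma allPicks_toFinset_eq (p : Player) (h : SHist) :
    (allPicks h).toFinset = spicked p .L h ∪ spicked p .R h := by
  induction h using List.reverseRecOn with
  | nil => simp [allPicks, spicked]
  | append_singleton h a ih =>
    rw [allPicks_snoc, List.toFinset_append]
    have hLR : mover p h.length = .L ∨ mover p h.length = .R := by
      cases mover p h.length <;> simp
    cases a with
    | none =>
      rw [spicked_snoc_none, spicked_snoc_none]
      simpa using ih
    | some x =>
      rcases hLR with hm | hm
      · rw [spicked_snoc_some p .L h x hm, spicked_snoc_not_mover p .R h _ (by rw [hm]; simp)]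
        rw [ih]
        ext y
        simp only [Option.toList_some, List.toFinset_cons, List.toFinset_nil, LawfulSingleton.insert_empty_eq,
          Finset.mem_union, Finset.mem_insert, Finset.mem_singleton]
        tauto
      · rw [spicked_snoc_some p .R h x hm, spicked_snoc_not_mover p .L h _ (by rw [hm]; simp)]
        rw [ih]
        ext y
        simp only [Option.toList_some, List.toFinset_cons, List.toFinset_nil, LawfulSingleton.insert_empty_eq,
          Finset.mem_union, Finset.mem_insert, Finset.mem_singleton]
        tauto

lemma spicked_mono (p q : Player) {h1 h2 : SHist} (hpre : h1 <+: h2) :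
    spicked p q h1 ⊆ spicked p q h2 := by
  obtain ⟨t, rfl⟩ := hpre
  intro y hy
  rw [mem_spicked] at hy ⊢
  obtain ⟨i, hi, hm, hget⟩ := hy
  refine ⟨i, by simp; omega, hm, ?_⟩
  rwa [List.getD_append _ _ _ _ hi]

lemma passCount_snoc (p : Player) (h : SHist) (a : Option ℕ) :
    passCount p (h ++ [a]) =
      passCount p h + if mover p h.length = p.other ∧ a = none then 1 else 0 := by
  unfold passCount
  rw [enum_snoc, List.filter_append, List.length_append]
  congr 1
  by_cases hc : mover p h.length = p.other ∧ a = none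
  · obtain ⟨h1, h2⟩ := hc
    simp [List.filter_cons, h1, h2]
  · rw [if_neg hc]
    simp only [List.filter_cons, List.filter_nil]
    split
    · next hdec =>
      exfalso
      apply hc
      simpa using hdec
    · simp

lemma passCount_mono (p : Player) {h1 h2 : SHist} (hpre : h1 <+: h2) :
    passCount p h1 ≤ passCount p h2 := by
  obtain ⟨t, rfl⟩ := hpre
  induction t using List.reverseRecOn with
  | nil => simp
  | append_singleton t a ih =>
    rw [← List.append_assoc, passCount_snoc]
    omega

lemma sEnded_snoc_none (G : Game) (p : Player) (h : SHist) :
    sEnded G p (h ++ [none]) ↔ sEnded G p h := by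
  unfold sEnded
  rw [spicked_snoc_none, spicked_snoc_none, allPicks_snoc]
  simp

lemma sFollows_snoc (p : Player) (σ : SHist → ℕ) (h : SHist) (a : Option ℕ) :
    sFollows p σ (h ++ [a]) ↔
      sFollows p σ h ∧ (mover p h.length = p → a = some (σ h)) := by
  unfold sFollows
  constructor
  · intro H
    constructor
    · intro k hk hm
      have := H k (by simp; omega) hm
      rwa [getD_concat_lt _ _ _ hk, List.take_append_of_le_length (le_of_lt hk)] at this
    · intro hm
      have := H h.length (by simp) hm
      rwa [getD_concat_len, List.take_append_of_le_length (le_refl h.length),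
        List.take_length] at this
  · rintro ⟨H1, H2⟩ k hk hm
    simp only [List.length_append, List.length_singleton] at hk
    rcases Nat.lt_succ_iff_lt_or_eq.mp hk with hlt | rfl
    · rw [getD_concat_lt _ _ _ hlt, List.take_append_of_le_length (le_of_lt hlt)]
      exact H1 k hlt hm
    · rw [getD_concat_len, List.take_append_of_le_length (le_refl h.length), List.take_length]
      exact H2 hm

lemma sFollows_prefix (p : Player) (σ : SHist → ℕ) {h2 : SHist} (h1 : SHist)
    (hpre : h1 <+: h2) (hf : sFollows p σ h2) : sFollows p σ h1 := by
  obtain ⟨t, rfl⟩ := hpre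
  intro k hk hm
  have := hf k (by simp; omega) hm
  rwa [List.getD_append _ _ _ _ hk, List.take_append_of_le_length (le_of_lt hk)] at this

lemma sValid_snoc (G : Game) (p : Player) (h : SHist) (a : Option ℕ) :
    sValid G p (h ++ [a]) ↔
      sValid G p h ∧ (mover p h.length = p → a ≠ none) ∧ ¬ sEnded G p h ∧
        (∀ x, a = some x → x ∈ G.V ∧ x ∉ allPicks h) := by
  unfold sValid
  constructor
  · rintro ⟨hnd, hmem, hpass, hend⟩
    rw [allPicks_snoc] at hnd hmem
    have hnd' := List.nodup_append.mp hnd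
    refine ⟨⟨hnd'.1, fun y hy => hmem y (by simp [hy]), ?_, ?_⟩, ?_, ?_, ?_⟩
    · intro k hk hm
      have := hpass k (by simp; omega) hm
      rwa [getD_concat_lt _ _ _ hk] at this
    · intro k hk
      have := hend k (by simp; omega)
      rwa [List.take_append_of_le_length (le_of_lt hk)] at this
    · intro hm
      have := hpass h.length (by simp) hm
      rwa [getD_concat_len] at this
    · have := hend h.length (by simp)
      rwa [List.take_append_of_le_length (le_refl h.length), List.take_length] at this
    · rintro x rfl
      refine ⟨hmem x (by simp), ?_⟩
      intro hx
      exact hnd'.2.2 x hx x (by simp) rfl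
  · rintro ⟨⟨hnd, hmem, hpass, hend⟩, hpa, hne, hleg⟩
    refine ⟨?_, ?_, ?_, ?_⟩
    · rw [allPicks_snoc, List.nodup_append]
      refine ⟨hnd, ?_, ?_⟩
      · cases a <;> simp
      · intro y hy z hy2 hyz
        cases a with
        | none => simp at hy2
        | some x =>
          simp only [Option.toList_some, List.mem_singleton] at hy2
          subst hy2 hyz
          exact (hleg _ rfl).2 hy
    · rw [allPicks_snoc]
      intro y hy
      rcases List.mem_append.mp hy with hy | hy
      · exact hmem y hy
      · cases a with
        | none => simp at hy
        | some x =>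
          simp only [Option.toList_some, List.mem_singleton] at hy
          subst hy
          exact (hleg y rfl).1
    · intro k hk hm
      simp only [List.length_append, List.length_singleton] at hk
      rcases Nat.lt_succ_iff_lt_or_eq.mp hk with hlt | rfl
      · rw [getD_concat_lt _ _ _ hlt]
        exact hpass k hlt hm
      · rw [getD_concat_len]
        exact hpa hm
    · intro k hk
      simp only [List.length_append, List.length_singleton] at hk
      rcases Nat.lt_succ_iff_lt_or_eq.mp hk with hlt | rfl
      · rw [List.take_append_of_le_length (le_of_lt hlt)]
        exact hend k hlt
      · rwa [List.take_append_of_le_length (le_refl h.length), List.take_length]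

lemma sValid_prefix (G : Game) (p : Player) {h2 : SHist} (h1 : SHist)
    (hpre : h1 <+: h2) (hv : sValid G p h2) : sValid G p h1 := by
  obtain ⟨t, rfl⟩ := hpre
  obtain ⟨hnd, hmem, hpass, hend⟩ := hv
  have hap : allPicks h1 <+: allPicks (h1 ++ t) := by
    unfold allPicks
    rw [List.filterMap_append]
    exact ⟨_, rfl⟩
  refine ⟨hnd.sublist hap.sublist, fun y hy => hmem y (hap.sublist.mem hy), ?_, ?_⟩
  · intro k hk hm
    have := hpass k (by simp; omega) hm
    rwa [List.getD_append _ _ _ _ hk] at this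
  · intro k hk
    have := hend k (by simp; omega)
    rwa [List.take_append_of_le_length (le_of_lt hk)] at this

end AuxScore

section AuxExtension

lemma mover_succ_self_iff (s : Player) (k : ℕ) :
    mover s (k + 1) = s ↔ mover s k = s.other := by
  rw [mover_eq_self_iff, mover_eq_other_iff]
  omega

lemma mover_succ_other_iff (s : Player) (k : ℕ) :
    mover s (k + 1) = s.other ↔ mover s k = s := by
  rw [mover_eq_self_iff, mover_eq_other_iff]
  omega

lemma mover_self_or_other (s : Player) (k : ℕ) :
    mover s k = s ∨ mover s k = s.other := by
  rw [mover_eq_self_iff, mover_eq_other_iff]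
  omega

lemma exists_ended_extension (G : Game) (p : Player) (σ : SHist → ℕ)
    (hleg : sLegal G p σ) :
    ∀ n (h : SHist),
      2 * (G.V \ (allPicks h).toFinset).card +
        (if mover p h.length = p.other then 1 else 0) ≤ n →
      sValid G p h → sFollows p σ h →
      ∃ h', h <+: h' ∧ sValid G p h' ∧ sFollows p σ h' ∧ sEnded G p h' := by
  intro n
  induction n with
  | zero =>
    intro h hmeas hv hf
    by_cases hne : sEnded G p h
    · exact ⟨h, List.prefix_refl h, hv, hf, hne⟩
    · exfalso
      rcases mover_self_or_other p h.length with hm | hm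
      · have hσ := hleg h hv hf hne hm
        have : σ h ∈ G.V \ (allPicks h).toFinset := by
          rw [Finset.mem_sdiff, List.mem_toFinset]
          exact ⟨hσ.1, hσ.2⟩
        have : (G.V \ (allPicks h).toFinset).Nonempty := ⟨_, this⟩
        have := Finset.card_pos.mpr this
        omega
      · rw [if_pos hm] at hmeas
        omega
  | succ n ih =>
    intro h hmeas hv hf
    by_cases hne : sEnded G p h
    · exact ⟨h, List.prefix_refl h, hv, hf, hne⟩
    · rcases mover_self_or_other p h.length with hm | hm
      · have hσ := hleg h hv hf hne hm
        set u := σ h with hu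
        have hv1 : sValid G p (h ++ [some u]) := by
          rw [sValid_snoc]
          refine ⟨hv, fun _ => by simp, hne, ?_⟩
          rintro x hx
          injection hx with hx
          subst hx
          exact hσ
        have hf1 : sFollows p σ (h ++ [some u]) := by
          rw [sFollows_snoc]
          exact ⟨hf, fun _ => rfl⟩
        have hmeas1 : 2 * (G.V \ (allPicks (h ++ [some u])).toFinset).card +
            (if mover p (h ++ [some u]).length = p.other then 1 else 0) ≤ n := by
          have hsub : G.V \ (allPicks (h ++ [some u])).toFinset ⊆
              (G.V \ (allPicks h).toFinset).erase u := by
            intro y hy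
            rw [Finset.mem_sdiff] at hy
            rw [allPicks_snoc] at hy
            simp only [Option.toList_some, List.toFinset_append, List.toFinset_cons,
              List.toFinset_nil, LawfulSingleton.insert_empty_eq, Finset.mem_union, Finset.mem_insert,
              Finset.mem_singleton, not_or] at hy
            rw [Finset.mem_erase, Finset.mem_sdiff, List.mem_toFinset]
            exact ⟨hy.2.2, hy.1, fun hc => hy.2.1 (List.mem_toFinset.mpr hc)⟩
          have hcard : (G.V \ (allPicks (h ++ [some u])).toFinset).card ≤
              (G.V \ (allPicks h).toFinset).card - 1 := by
            have h1 := Finset.card_le_card hsub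
            have hu_mem : u ∈ G.V \ (allPicks h).toFinset := by
              rw [Finset.mem_sdiff, List.mem_toFinset]
              exact ⟨hσ.1, hσ.2⟩
            have h2 := Finset.card_erase_of_mem hu_mem
            omega
          have hpos : 0 < (G.V \ (allPicks h).toFinset).card := by
            apply Finset.card_pos.mpr
            refine ⟨u, ?_⟩
            rw [Finset.mem_sdiff, List.mem_toFinset]
            exact ⟨hσ.1, hσ.2⟩
          rw [if_neg (by rw [mover_eq_other_iff]; rw [mover_eq_self_iff] at hm; omega :
            ¬ mover p h.length = p.other)] at hmeas
          simp only [List.length_append, List.length_singleton]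
          rw [if_pos ((mover_succ_other_iff p h.length).mpr hm)]
          omega
        obtain ⟨h', hpre, hv', hf', he'⟩ := ih (h ++ [some u]) hmeas1 hv1 hf1
        exact ⟨h', (List.prefix_append h [some u]).trans hpre, hv', hf', he'⟩
      · have hv1 : sValid G p (h ++ [none]) := by
          rw [sValid_snoc]
          refine ⟨hv, ?_, hne, by simp⟩
          intro hmp
          rw [hm] at hmp
          exact absurd hmp.symm (Player.ne_other p)
        have hf1 : sFollows p σ (h ++ [none]) := by
          rw [sFollows_snoc]
          refine ⟨hf, ?_⟩
          intro hmp
          rw [hm] at hmp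
          exact absurd hmp.symm (Player.ne_other p)
        have hmeas1 : 2 * (G.V \ (allPicks (h ++ [none])).toFinset).card +
            (if mover p (h ++ [none]).length = p.other then 1 else 0) ≤ n := by
          rw [allPicks_snoc]
          simp only [Option.toList_none, List.append_nil, List.length_append,
            List.length_singleton]
          rw [if_pos hm] at hmeas
          rw [if_neg]
          · omega
          · rw [mover_succ_other_iff]
            intro hmp
            rw [hmp] at hm
            exact Player.ne_other p hm
        obtain ⟨h', hpre, hv', hf', he'⟩ := ih (h ++ [none]) hmeas1 hv1 hf1
        exact ⟨h', (List.prefix_append h [none]).trans hpre, hv', hf', he'⟩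

/-- If `p` can ensure score `≤ n` via `σ`, then along any consistent history the
opponent has passed at most `n` times. -/
lemma passCount_le_of_ensure (G : Game) (p : Player) (σ : SHist → ℕ) (n : ℕ)
    (hleg : sLegal G p σ)
    (hens : ∀ h, sValid G p h → sFollows p σ h → sEnded G p h →
      fills (G.edges p) (spicked p p h) ∧ passCount p h ≤ n)
    (h : SHist) (hv : sValid G p h) (hf : sFollows p σ h) : passCount p h ≤ n := by
  obtain ⟨h', hpre, hv', hf', he'⟩ :=
    exists_ended_extension G p σ hleg _ h (le_refl _) hv hf
  exact le_trans (passCount_mono p hpre) (hens h' hv' hf' he').2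

/-- Moreover if the game is not over and it is the opponent's turn, the opponent
can still pass once more, so the count so far is strictly below `n`. -/
lemma passCount_succ_le_of_ensure (G : Game) (p : Player) (σ : SHist → ℕ) (n : ℕ)
    (hleg : sLegal G p σ)
    (hens : ∀ h, sValid G p h → sFollows p σ h → sEnded G p h →
      fills (G.edges p) (spicked p p h) ∧ passCount p h ≤ n)
    (h : SHist) (hv : sValid G p h) (hf : sFollows p σ h)
    (hne : ¬ sEnded G p h) (hm : mover p h.length = p.other) :
    passCount p h + 1 ≤ n := by
  have hv1 : sValid G p (h ++ [none]) := by
    rw [sValid_snoc]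
    refine ⟨hv, ?_, hne, by simp⟩
    intro hmp
    rw [hm] at hmp
    exact absurd hmp.symm (Player.ne_other p)
  have hf1 : sFollows p σ (h ++ [none]) := by
    rw [sFollows_snoc]
    refine ⟨hf, ?_⟩
    intro hmp
    rw [hm] at hmp
    exact absurd hmp.symm (Player.ne_other p)
  have := passCount_le_of_ensure G p σ n hleg hens (h ++ [none]) hv1 hf1
  rw [passCount_snoc, if_pos ⟨hm, rfl⟩] at this
  omega

end AuxExtension

section Ghost

lemma passCount_le_length (p : Player) (h : SHist) : passCount p h ≤ h.length := by
  unfold passCount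
  calc ((h.zipIdx.map Prod.swap).filter _).length ≤ (h.zipIdx.map Prod.swap).length :=
      List.length_filter_le _ _
    _ = h.length := by simp

variable (G : Game) (p : Player) (σ : Strategy)

/-- A fresh vertex of the board, not in `v`. -/
noncomputable def ghostFresh (v : List ℕ) : ℕ :=
  if h : (G.V \ v.toFinset).Nonempty then h.choose else 0

lemma ghostFresh_spec {v : List ℕ} (h : (G.V \ v.toFinset).Nonempty) :
    ghostFresh G v ∈ G.V ∧ ghostFresh G v ∉ v := by
  unfold ghostFresh
  rw [dif_pos h]
  have := h.choose_spec
  rw [Finset.mem_sdiff, List.mem_toFinset] at this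
  exact this

end Ghost

/-- The virtual (ghost) alternating history associated to a reversed scoring
history: passes of the opponent are replaced by fresh "ghost" moves. -/
noncomputable def ghostRev (G : Game) (p : Player) : List (Option ℕ) → List ℕ
  | [] => []
  | a :: rest =>
    let v := ghostRev G p rest
    if mover p rest.length = p then
      v ++ [a.getD 0]
    else
      match a with
      | some x => if x ∈ v then v ++ [ghostFresh G v] else v ++ [x]
      | none => v ++ [ghostFresh G v]

lemma ghostRev_cons (G : Game) (p : Player) (a : Option ℕ) (rest : List (Option ℕ)) :
    ghostRev G p (a :: rest) =
      let v := ghostRev G p rest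
      if mover p rest.length = p then
        v ++ [a.getD 0]
      else
        match a with
        | some x => if x ∈ v then v ++ [ghostFresh G v] else v ++ [x]
        | none => v ++ [ghostFresh G v] := by
  conv_lhs => rw [ghostRev.eq_def]

/-- The ghost history of a scoring history. -/
noncomputable def ghost (G : Game) (p : Player) (hs : SHist) : List ℕ :=
  ghostRev G p hs.reverse

section Ghost2

variable (G : Game) (p : Player) (σ : Strategy)

lemma ghost_nil : ghost G p [] = [] := rfl

lemma ghost_snoc (h : SHist) (a : Option ℕ) :
    ghost G p (h ++ [a]) =
      let v := ghost G p h
      if mover p h.length = p then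
        v ++ [a.getD 0]
      else
        match a with
        | some x => if x ∈ v then v ++ [ghostFresh G v] else v ++ [x]
        | none => v ++ [ghostFresh G v] := by
  unfold ghost
  rw [List.reverse_append, List.reverse_singleton, List.singleton_append]
  rw [ghostRev_cons, List.length_reverse]

lemma ghost_invariant
    (hleg : Legal G p p σ)
    (hwin : ∀ h, ValidHist G p h → Follows p p σ h → Complete G p h →
      fills (G.edges p) (picked p p h)) :
    ∀ hs : SHist, sValid G p hs → sFollows p (fun t => σ (ghost G p t)) hs →
      (ghost G p hs).length = hs.length ∧
      ValidHist G p (ghost G p hs) ∧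
      Follows p p σ (ghost G p hs) ∧
      spicked p p hs = picked p p (ghost G p hs) ∧
      spicked p p.other hs ⊆ picked p p.other (ghost G p hs) := by
  intro hs
  induction hs using List.reverseRecOn with
  | nil =>
    intro _ _
    simp only [ghost_nil]
    refine ⟨rfl, ⟨List.nodup_nil, by simp, by simp⟩, ?_, ?_, ?_⟩
    · intro k hk; simp at hk
    · ext y; simp [mem_spicked, mem_picked]
    · intro y hy; rw [mem_spicked] at hy; obtain ⟨i, hi, _⟩ := hy; simp at hi
  | append_singleton h a IH =>
    intro hv hf
    rw [sValid_snoc] at hv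
    obtain ⟨hvh, hpa, hneh, hlega⟩ := hv
    have hfh : sFollows p (fun t => σ (ghost G p t)) h :=
      sFollows_prefix _ _ _ (List.prefix_append _ _) hf
    obtain ⟨hlen, hvv, hfv, hpp, hpo⟩ := IH hvh hfh
    set v := ghost G p h with hvdef
    -- the virtual game is not over
    have hnev : ¬ ended G p v := by
      intro hend
      have := hwin v hvv hfv (Or.inl hend)
      rw [← hpp] at this
      exact hneh (Or.inl this)
    have hvsub : ∀ y ∈ v, y ∈ G.V := hvv.2.1
    have hvnodup : v.Nodup := hvv.1
    have hvcard : v.length ≤ G.V.card := by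
      have h1 : v.toFinset.card = v.length := List.toFinset_card_of_nodup hvnodup
      have h2 : v.toFinset ⊆ G.V := fun y hy => hvsub y (List.mem_toFinset.mp hy)
      have := Finset.card_le_card h2
      omega
    have hvlt : v.length < G.V.card := by
      rcases Nat.lt_or_ge v.length G.V.card with h1 | h1
      · exact h1
      · exfalso
        have := hwin v hvv hfv (Or.inr (by omega))
        rw [← hpp] at this
        exact hneh (Or.inl this)
    -- fresh vertices exist
    have hfresh_ex : (G.V \ v.toFinset).Nonempty := by
      rw [← Finset.card_pos, Finset.card_sdiff_of_subset
        (fun y hy => hvsub y (List.mem_toFinset.mp hy))]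
      have : v.toFinset.card = v.length := List.toFinset_card_of_nodup hvnodup
      omega
    rcases mover_self_or_other p h.length with hm | hm
    · -- p's slot
      rw [sFollows_snoc] at hf
      have ha : a = some (σ v) := hf.2 hm
      have hgs : ghost G p (h ++ [a]) = v ++ [σ v] := by
        rw [ghost_snoc, ← hvdef]
        simp [hm, ha]
      have hmv : mover p v.length = p := by rw [hlen]; exact hm
      have hσleg := hleg v hvv hfv hnev hvlt hmv
      refine ⟨?_, ?_, ?_, ?_, ?_⟩
      · rw [hgs]; simp [hlen]
      · rw [hgs, ValidHist_snoc]
        exact ⟨hvv, hσleg.2, hσleg.1, hnev⟩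
      · rw [hgs, Follows_snoc]
        exact ⟨hfv, fun _ => rfl⟩
      · rw [hgs, ha, picked_snoc, if_pos hmv, spicked_snoc_some p p h _ hm, hpp]
      · rw [hgs, ha, picked_snoc, if_neg (by rw [hmv]; exact Player.ne_other p),
          spicked_snoc_not_mover p p.other h _ (by rw [hm]; exact Player.ne_other p)]
        exact hpo
    · -- opponent's slot
      have hmv : mover p v.length = p.other := by rw [hlen]; exact hm
      have hmv' : ¬ mover p v.length = p := by
        rw [hmv]; exact Player.other_ne p
      have hm' : ¬ mover p h.length = p := by rw [hm]; exact Player.other_ne p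
      -- determine the appended ghost vertex
      obtain ⟨z, hgs, hzV, hzv, hzo⟩ :
          ∃ z, ghost G p (h ++ [a]) = v ++ [z] ∧ z ∈ G.V ∧ z ∉ v ∧
            (spicked p p.other (h ++ [a]) ⊆ insert z (picked p p.other v)) := by
        cases a with
        | none =>
          refine ⟨ghostFresh G v, ?_, (ghostFresh_spec G hfresh_ex).1,
            (ghostFresh_spec G hfresh_ex).2, ?_⟩
          · rw [ghost_snoc, ← hvdef]; simp [hm']
          · rw [spicked_snoc_none]
            exact hpo.trans (Finset.subset_insert _ _)
        | some x =>
          by_cases hxv : x ∈ v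
          · refine ⟨ghostFresh G v, ?_, (ghostFresh_spec G hfresh_ex).1,
              (ghostFresh_spec G hfresh_ex).2, ?_⟩
            · rw [ghost_snoc, ← hvdef]; simp [hm', hxv]
            · rw [spicked_snoc_some p p.other h x hm]
              have hxo : x ∈ picked p p.other v := by
                have hxall : x ∉ allPicks h := (hlega x rfl).2
                have hxfin : x ∈ v.toFinset := List.mem_toFinset.mpr hxv
                rw [toFinset_eq_picked_union p v] at hxfin
                have hxnp : x ∉ picked p p v := by
                  rw [← hpp]
                  intro hc
                  exact hxall (List.mem_toFinset.mp (spicked_subset p p h hc))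
                cases p with
                | L => rcases Finset.mem_union.mp hxfin with hc | hc
                       · exact absurd hc hxnp
                       · exact hc
                | R => rcases Finset.mem_union.mp hxfin with hc | hc
                       · exact hc
                       · exact absurd hc hxnp
              intro y hy
              rcases Finset.mem_insert.mp hy with rfl | hy
              · exact Finset.mem_insert_of_mem hxo
              · exact Finset.mem_insert_of_mem (hpo hy)
          · refine ⟨x, ?_, (hlega x rfl).1, hxv, ?_⟩
            · rw [ghost_snoc, ← hvdef]; simp [hm', hxv]
            · rw [spicked_snoc_some p p.other h x hm]
              intro y hy
              rcases Finset.mem_insert.mp hy with rfl | hy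
              · exact Finset.mem_insert_self _ _
              · exact Finset.mem_insert_of_mem (hpo hy)
      refine ⟨?_, ?_, ?_, ?_, ?_⟩
      · rw [hgs]; simp [hlen]
      · rw [hgs, ValidHist_snoc]
        exact ⟨hvv, hzv, hzV, hnev⟩
      · rw [hgs, Follows_snoc]
        exact ⟨hfv, fun hc => absurd hc hmv'⟩
      · rw [hgs, picked_snoc, if_neg hmv',
          spicked_snoc_not_mover p p h _ (by rw [hm]; exact Player.other_ne p), hpp]
      · rw [hgs, picked_snoc, if_pos hmv]
        exact hzo

/-- A winning strategy yields a finite ensured score. -/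
lemma canEnsure_of_winsAs (hwin : WinsAs G p p) : canEnsure G p G.V.card := by
  obtain ⟨σ, hleg, hguar⟩ := hwin
  refine ⟨fun t => σ (ghost G p t), ?_, ?_⟩
  · intro hs hv hf hne hm
    obtain ⟨hlen, hvv, hfv, hpp, hpo⟩ := ghost_invariant G p σ hleg hguar hs hv hf
    set v := ghost G p hs
    have hnev : ¬ ended G p v := by
      intro hend
      have := hguar v hvv hfv (Or.inl hend)
      rw [← hpp] at this
      exact hne (Or.inl this)
    have hvlt : v.length < G.V.card := by
      rcases Nat.lt_or_ge v.length G.V.card with h1 | h1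
      · exact h1
      · exfalso
        have hvcard : v.length ≤ G.V.card := by
          have h1' : v.toFinset.card = v.length := List.toFinset_card_of_nodup hvv.1
          have h2 : v.toFinset ⊆ G.V := fun y hy => hvv.2.1 y (List.mem_toFinset.mp hy)
          have := Finset.card_le_card h2
          omega
        have := hguar v hvv hfv (Or.inr (by omega))
        rw [← hpp] at this
        exact hne (Or.inl this)
    have hmv : mover p v.length = p := by rw [hlen]; exact hm
    have hσleg := hleg v hvv hfv hnev hvlt hmv
    refine ⟨hσleg.1, ?_⟩
    intro hc
    -- σ v is in the all picks of hs, but all real picks are in v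
    have h1 : (allPicks hs).toFinset ⊆ v.toFinset := by
      rw [allPicks_toFinset_eq p hs, toFinset_eq_picked_union p v]
      cases p with
      | L =>
        apply Finset.union_subset
        · exact hpp ▸ Finset.subset_union_left
        · exact hpo.trans Finset.subset_union_right
      | R =>
        apply Finset.union_subset
        · exact hpo.trans Finset.subset_union_left
        · exact hpp ▸ Finset.subset_union_right
    exact hσleg.2 (List.mem_toFinset.mp (h1 (List.mem_toFinset.mpr hc)))
  · intro hs hv hf hend
    obtain ⟨hlen, hvv, hfv, hpp, hpo⟩ := ghost_invariant G p σ hleg hguar hs hv hf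
    set v := ghost G p hs
    have h1 : (allPicks hs).toFinset ⊆ v.toFinset := by
      rw [allPicks_toFinset_eq p hs, toFinset_eq_picked_union p v]
      cases p with
      | L =>
        apply Finset.union_subset
        · exact hpp ▸ Finset.subset_union_left
        · exact hpo.trans Finset.subset_union_right
      | R =>
        apply Finset.union_subset
        · exact hpo.trans Finset.subset_union_left
        · exact hpp ▸ Finset.subset_union_right
    have hvcard : v.length ≤ G.V.card := by
      have h1' : v.toFinset.card = v.length := List.toFinset_card_of_nodup hvv.1
      have h2 : v.toFinset ⊆ G.V := fun y hy => hvv.2.1 y (List.mem_toFinset.mp hy)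
      have := Finset.card_le_card h2
      omega
    have hcount : passCount p hs ≤ G.V.card := by
      have := passCount_le_length p hs
      omega
    refine ⟨?_, hcount⟩
    rcases hend with hfl | hfl | hfl
    · exact hfl
    · -- opponent filled: then virtually complete, so p filled too
      have hendv : ended G p v := by
        rw [ended_iff_player G p p v]
        exact Or.inr (fills_mono (le_refl _) hpo hfl)
      have := hguar v hvv hfv (Or.inl hendv)
      rwa [← hpp] at this
    · -- board exhausted
      have hVsub : G.V ⊆ v.toFinset := hfl.trans h1
      have hcomp : v.length = G.V.card := by
        have h1' : v.toFinset.card = v.length := List.toFinset_card_of_nodup hvv.1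
        have h2 : v.toFinset ⊆ G.V := fun y hy => hvv.2.1 y (List.mem_toFinset.mp hy)
        have heq : v.toFinset = G.V := Finset.Subset.antisymm h2 hVsub
        rw [← h1', heq]
      have := hguar v hvv hfv (Or.inr hcomp)
      rwa [← hpp] at this

end Ghost2

section EnsureFrom

lemma getD_of_prefix {α : Type*} (d : α) {h0 h : List α} (hpre : h0 <+: h) {i : ℕ}
    (hi : i < h0.length) : h.getD i d = h0.getD i d := by
  obtain ⟨t, rfl⟩ := hpre
  exact List.getD_append _ _ _ _ hi

lemma take_of_prefix {α : Type*} {h0 h : List α} (hpre : h0 <+: h) :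
    h.take h0.length = h0 := (List.prefix_iff_eq_take.mp hpre).symm

lemma getD_take_of_lt {α : Type*} (d : α) (h : List α) {i k : ℕ} (hik : i < k)
    (hk : k ≤ h.length) : (h.take k).getD i d = h.getD i d := by
  have hpre : h.take k <+: h := List.take_prefix _ _
  have hlen : (h.take k).length = k := by
    rw [List.length_take]
    omega
  rw [getD_of_prefix d hpre (by omega : i < (h.take k).length)]

lemma prefix_snoc_of_lt {α : Type*} (d : α) {h0 h : List α} (hpre : h0 <+: h)
    (hlt : h0.length < h.length) : h0 ++ [h.getD h0.length d] <+: h := by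
  obtain ⟨t, rfl⟩ := hpre
  cases t with
  | nil => simp at hlt
  | cons a t' =>
    have hget : (h0 ++ a :: t').getD h0.length d = a := by
      simp [List.getD, List.getElem?_append_right (le_refl h0.length)]
    rw [hget]
    exact ⟨t', by simp⟩

/-- `h` follows `σ` (for player `q`) from position `h0` onwards. -/
def followsFrom (q : Player) (σ : SHist → ℕ) (h0 h : SHist) : Prop :=
  ∀ k, h0.length ≤ k → k < h.length → mover q k = q → h.getD k none = some (σ (h.take k))

/-- Player `q` can, from position `h0` of the scoring game `sc_q(G)`, ensure filling
one of their edges with a total pass count at most `n`. -/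
def ensureFrom (G : Game) (q : Player) (n : ℕ) (h0 : SHist) : Prop :=
  ∃ σ : SHist → ℕ,
    (∀ h, h0 <+: h → sValid G q h → followsFrom q σ h0 h → ¬ sEnded G q h →
        mover q h.length = q → σ h ∈ G.V ∧ σ h ∉ allPicks h) ∧
    (∀ h, h0 <+: h → sValid G q h → followsFrom q σ h0 h → sEnded G q h →
        fills (G.edges q) (spicked q q h) ∧ passCount q h ≤ n)

lemma canEnsure_of_ensureFrom_nil {G : Game} {q : Player} {n : ℕ}
    (h : ensureFrom G q n []) : canEnsure G q n := by
  obtain ⟨σ, h1, h2⟩ := h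
  refine ⟨σ, ?_, ?_⟩
  · intro h hv hf hne hm
    exact h1 h (List.nil_prefix) hv (fun k _ hk hmk => hf k hk hmk) hne hm
  · intro h hv hf he
    exact h2 h (List.nil_prefix) hv (fun k _ hk hmk => hf k hk hmk) he

/-- Pasting: if the opponent is to act at a non-ended position from which `q` cannot
ensure, then the opponent has an action (pass or legal pick) preserving this. -/
lemma ensureFrom_pasting (G : Game) (q : Player) (n : ℕ) (h0 : SHist)
    (hm : mover q h0.length = q.other) (hne : ¬ sEnded G q h0)
    (hnE : ¬ ensureFrom G q n h0) :
    ∃ a : Option ℕ, (∀ x, a = some x → x ∈ G.V ∧ x ∉ allPicks h0) ∧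
      ¬ ensureFrom G q n (h0 ++ [a]) := by
  by_contra hcon
  push_neg at hcon
  apply hnE
  have hch : ∀ a : Option ℕ, ∃ σa : SHist → ℕ,
      (∀ x, a = some x → x ∈ G.V ∧ x ∉ allPicks h0) →
      ((∀ h, (h0 ++ [a]) <+: h → sValid G q h → followsFrom q σa (h0 ++ [a]) h →
          ¬ sEnded G q h → mover q h.length = q → σa h ∈ G.V ∧ σa h ∉ allPicks h) ∧
       (∀ h, (h0 ++ [a]) <+: h → sValid G q h → followsFrom q σa (h0 ++ [a]) h →
          sEnded G q h →
          fills (G.edges q) (spicked q q h) ∧ passCount q h ≤ n)) := by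
    intro a
    by_cases hE : ensureFrom G q n (h0 ++ [a])
    · obtain ⟨σa, ha1, ha2⟩ := hE
      exact ⟨σa, fun _ => ⟨ha1, ha2⟩⟩
    · exact ⟨fun _ => 0, fun hleg => absurd (hcon a hleg) hE⟩
  choose Sf hS using hch
  refine ⟨fun h => Sf (h.getD h0.length none) h, ?_, ?_⟩
  · intro h hpre hv hff hneh hmh
    by_cases hlen : h0.length < h.length
    · set a := h.getD h0.length none with hadef
      have hpre2 : h0 ++ [a] <+: h := prefix_snoc_of_lt none hpre hlen
      have haleg : ∀ x, a = some x → x ∈ G.V ∧ x ∉ allPicks h0 := by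
        intro x hx
        have hv1 := sValid_prefix G q _ hpre2 hv
        rw [sValid_snoc] at hv1
        exact hv1.2.2.2 x hx
      have hspec := hS a haleg
      have hffa : followsFrom q (Sf a) (h0 ++ [a]) h := by
        intro k hk1 hk2 hmk
        simp only [List.length_append, List.length_singleton] at hk1
        have := hff k (by omega) hk2 hmk
        rw [this]
        congr 1
        show Sf ((h.take k).getD h0.length none) (h.take k) = Sf a (h.take k)
        rw [getD_take_of_lt none h (by omega) (le_of_lt hk2)]
      exact hspec.1 h hpre2 hv hffa hneh hmh
    · have heq : h = h0 := (hpre.eq_of_length_le (not_lt.mp hlen)).symm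
      subst heq
      rw [hm] at hmh
      exact absurd hmh (Player.other_ne q)
  · intro h hpre hv hff hendh
    by_cases hlen : h0.length < h.length
    · set a := h.getD h0.length none with hadef
      have hpre2 : h0 ++ [a] <+: h := prefix_snoc_of_lt none hpre hlen
      have haleg : ∀ x, a = some x → x ∈ G.V ∧ x ∉ allPicks h0 := by
        intro x hx
        have hv1 := sValid_prefix G q _ hpre2 hv
        rw [sValid_snoc] at hv1
        exact hv1.2.2.2 x hx
      have hspec := hS a haleg
      have hffa : followsFrom q (Sf a) (h0 ++ [a]) h := by
        intro k hk1 hk2 hmk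
        simp only [List.length_append, List.length_singleton] at hk1
        have := hff k (by omega) hk2 hmk
        rw [this]
        congr 1
        show Sf ((h.take k).getD h0.length none) (h.take k) = Sf a (h.take k)
        rw [getD_take_of_lt none h (by omega) (le_of_lt hk2)]
      exact hspec.2 h hpre2 hv hffa hendh
    · have heq : h = h0 := (hpre.eq_of_length_le (not_lt.mp hlen)).symm
      subst heq
      exact absurd hendh hne

/-- If `q` cannot ensure from `h0` (with `q` to move), then after any legal move of
`q` they still cannot ensure. -/
lemma ensureFrom_move (G : Game) (q : Player) (n : ℕ) (h0 : SHist)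
    (hm : mover q h0.length = q) (hne : ¬ sEnded G q h0)
    (v : ℕ) (hvV : v ∈ G.V) (hvP : v ∉ allPicks h0)
    (hnE : ¬ ensureFrom G q n h0) : ¬ ensureFrom G q n (h0 ++ [some v]) := by
  intro hE
  apply hnE
  obtain ⟨σ1, hleg1, hguar1⟩ := hE
  have key : ∀ h, h0 <+: h →
      followsFrom q (fun h' => if h'.length = h0.length then v else σ1 h') h0 h →
      h0.length < h.length →
      (h0 ++ [some v] <+: h) ∧ followsFrom q σ1 (h0 ++ [some v]) h := by
    intro h hpre hff hlen
    have hget : h.getD h0.length none = some v := by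
      have := hff h0.length (le_refl _) hlen hm
      rw [take_of_prefix hpre] at this
      rw [this]
      show some (if h0.length = h0.length then v else σ1 h0) = some v
      rw [if_pos rfl]
    constructor
    · have := prefix_snoc_of_lt none hpre hlen
      rwa [hget] at this
    · intro k hk1 hk2 hmk
      simp only [List.length_append, List.length_singleton] at hk1
      have := hff k (by omega) hk2 hmk
      rw [this]
      congr 1
      have hlent : (h.take k).length = k := by
        rw [List.length_take]; omega
      show (if (h.take k).length = h0.length then v else σ1 (h.take k)) = σ1 (h.take k)
      rw [if_neg (by omega : ¬ (h.take k).length = h0.length)]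
  refine ⟨fun h' => if h'.length = h0.length then v else σ1 h', ?_, ?_⟩
  · intro h hpre hv hff hneh hmh
    by_cases hlen : h0.length < h.length
    · obtain ⟨hpre2, hffa⟩ := key h hpre hff hlen
      have := hleg1 h hpre2 hv hffa hneh hmh
      show (if h.length = h0.length then v else σ1 h) ∈ G.V ∧
          (if h.length = h0.length then v else σ1 h) ∉ allPicks h
      rw [if_neg (by omega : ¬ h.length = h0.length)]
      exact this
    · have heq : h = h0 := (hpre.eq_of_length_le (not_lt.mp hlen)).symm
      subst heq
      show (if h.length = h.length then v else σ1 h) ∈ G.V ∧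
          (if h.length = h.length then v else σ1 h) ∉ allPicks h
      rw [if_pos rfl]
      exact ⟨hvV, hvP⟩
  · intro h hpre hv hff hendh
    by_cases hlen : h0.length < h.length
    · obtain ⟨hpre2, hffa⟩ := key h hpre hff hlen
      exact hguar1 h hpre2 hv hffa hendh
    · have heq : h = h0 := (hpre.eq_of_length_le (not_lt.mp hlen)).symm
      subst heq
      exact absurd hendh hne

/-- If `q`, to move at a non-ended position, has a legal move that immediately ends
the game with `q` having filled and few passes, then `q` can ensure from there. -/
lemma ensureFrom_of_fill (G : Game) (q : Player) (n : ℕ) (h0 : SHist) (v : ℕ)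
    (hm : mover q h0.length = q) (hne : ¬ sEnded G q h0)
    (hvV : v ∈ G.V) (hvP : v ∉ allPicks h0)
    (hend : sEnded G q (h0 ++ [some v]))
    (hfill : fills (G.edges q) (spicked q q (h0 ++ [some v])))
    (hcnt : passCount q (h0 ++ [some v]) ≤ n) : ensureFrom G q n h0 := by
  have key : ∀ h, h0 <+: h → sValid G q h →
      followsFrom q (fun _ => v) h0 h → h0.length < h.length → h = h0 ++ [some v] := by
    intro h hpre hv hff hlen
    have hget : h.getD h0.length none = some v := by
      have := hff h0.length (le_refl _) hlen hm
      rw [this]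
    have hpre2 : h0 ++ [some v] <+: h := by
      have := prefix_snoc_of_lt none hpre hlen
      rwa [hget] at this
    rcases Nat.lt_or_ge (h0.length + 1) h.length with hlt2 | hge2
    · exfalso
      obtain ⟨hnd, hmem, hpass, hendp⟩ := hv
      apply hendp (h0.length + 1) hlt2
      have : h.take (h0.length + 1) = h0 ++ [some v] := by
        have := take_of_prefix hpre2
        simpa using this
      rw [this]
      exact hend
    · exact (hpre2.eq_of_length_le (by simpa using hge2)).symm
  refine ⟨fun _ => v, ?_, ?_⟩
  · intro h hpre hv hff hneh hmh
    by_cases hlen : h0.length < h.length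
    · have heq := key h hpre hv hff hlen
      subst heq
      exact absurd hend hneh
    · have heq : h = h0 := (hpre.eq_of_length_le (not_lt.mp hlen)).symm
      subst heq
      exact ⟨hvV, hvP⟩
  · intro h hpre hv hff hendh
    by_cases hlen : h0.length < h.length
    · have heq := key h hpre hv hff hlen
      subst heq
      exact ⟨hfill, hcnt⟩
    · have heq : h = h0 := (hpre.eq_of_length_le (not_lt.mp hlen)).symm
      subst heq
      exact absurd hendh hne

end EnsureFrom

section MainDefs

open scoped Classical

/-- One step of decoding a history of the union game into the pair of simulated
scoring histories (for the first player's game `A` and the opponent's game `B`). -/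
noncomputable def dstep (A B : Game) (p : Player) (tau : SHist → Option ℕ)
    (st : SHist × SHist) (ix : ℕ × ℕ) : SHist × SHist :=
  if ix.1 % 2 = 0 then
    -- the first player `p` just moved, playing `ix.2`
    if st.1.length % 2 = 0 then (st.1 ++ [some ix.2], st.2)
    else if sEnded B p.other st.2 then (st.1 ++ [none, some ix.2], st.2)
    else match tau st.2 with
      | some _ => (st.1, st.2 ++ [some ix.2])
      | none => (st.1 ++ [none, some ix.2], st.2 ++ [none])
  else
    -- the opponent just moved
    if ix.2 ∈ A.V then (st.1 ++ [some ix.2], st.2) else (st.1, st.2 ++ [some ix.2])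

/-- Decode a history of the union game into the two simulated scoring histories. -/
noncomputable def decode (A B : Game) (p : Player) (tau : SHist → Option ℕ)
    (h : List ℕ) : SHist × SHist :=
  (h.zipIdx.map Prod.swap).foldl (dstep A B p tau) ([], [])

lemma decode_nil (A B : Game) (p : Player) (tau : SHist → Option ℕ) :
    decode A B p tau [] = ([], []) := rfl

lemma decode_snoc (A B : Game) (p : Player) (tau : SHist → Option ℕ)
    (h : List ℕ) (x : ℕ) :
    decode A B p tau (h ++ [x]) = dstep A B p tau (decode A B p tau h) (h.length, x) := by
  unfold decode
  rw [enum_snoc, List.foldl_append]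
  rfl

/-- The union strategy of player `p`. -/
noncomputable def sigU (A B : Game) (p : Player) (σ : SHist → ℕ)
    (tau : SHist → Option ℕ) : Strategy := fun h =>
  let st := decode A B p tau h
  if st.1.length % 2 = 0 then σ st.1
  else if sEnded B p.other st.2 then σ (st.1 ++ [none])
  else match tau st.2 with
    | some w => w
    | none => σ (st.1 ++ [none])

/-- The invariant carried along internal (non-ended) positions of the union game. -/
structure St (A B : Game) (p : Player) (σ : SHist → ℕ) (n' : ℕ) (h : List ℕ)
    (qs ps : SHist) : Prop where
  qv : sValid A p qs
  qf : sFollows p σ qs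
  pv : sValid B p.other ps
  par1 : h.length % 2 = 1 → qs.length % 2 = 1 ∧ (ps.length % 2 = 0 ∨ sEnded B p.other ps)
  par0 : h.length % 2 = 0 →
    (qs.length % 2 = 0 ∧ (ps.length % 2 = 0 ∨ sEnded B p.other ps)) ∨
    (qs.length % 2 = 1 ∧ ps.length % 2 = 1)
  pk1 : spicked p p qs = picked p p h ∩ A.V
  pk2 : spicked p p.other qs = picked p p.other h ∩ A.V
  pk3 : spicked p.other p.other ps = picked p p.other h ∩ B.V
  pk4 : spicked p.other p ps = picked p p h ∩ B.V
  sync : passCount p qs = passCount p.other ps ∨ sEnded B p.other ps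
  W : ¬ ensureFrom B p.other n' ps

lemma gunion_edges (A B : Game) (q : Player) :
    (gunion A B).edges q = A.edges q ∪ B.edges q := by
  cases q <;> rfl

namespace St

variable {A B : Game} {p : Player} {σ : SHist → ℕ} {n' : ℕ} {h : List ℕ} {qs ps : SHist}

/-- All picks of the simulated `A`-game. -/
lemma qs_allPicks (st : St A B p σ n' h qs ps) :
    (allPicks qs).toFinset = h.toFinset ∩ A.V := by
  rw [allPicks_toFinset_eq p qs, toFinset_eq_picked_union p h, Finset.union_inter_distrib_right]
  have h1 := st.pk1
  have h2 := st.pk2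
  cases p with
  | L => simp only [Player.other] at h1 h2 ⊢; rw [h1, h2]
  | R => simp only [Player.other] at h1 h2 ⊢; rw [h1, h2]

lemma ps_allPicks (st : St A B p σ n' h qs ps) :
    (allPicks ps).toFinset = h.toFinset ∩ B.V := by
  rw [allPicks_toFinset_eq p.other ps, toFinset_eq_picked_union p h,
    Finset.union_inter_distrib_right]
  have h3 := st.pk3
  have h4 := st.pk4
  cases p with
  | L => simp only [Player.other] at h3 h4 ⊢; rw [h3, h4]
  | R => simp only [Player.other] at h3 h4 ⊢; rw [h3, h4]

/-- If the union game has not ended, neither simulated fill has occurred. -/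
lemma noPfill' (st : St A B p σ n' h qs ps) (hWB : WellFormed B)
    (hne : ¬ ended (gunion A B) p h) :
    ¬ fills (B.edges p.other) (spicked p.other p.other ps) := by
  intro hfl
  apply hne
  rw [ended_iff_player _ p p.other, Player.other_other]
  refine Or.inl (fills_mono ?_ ?_ (st.pk3 ▸ hfl))
  · rw [gunion_edges]; exact Finset.subset_union_right
  · exact Finset.inter_subset_left

lemma noPfill (st : St A B p σ n' h qs ps) (hWB : WellFormed B)
    (hne : ¬ ended (gunion A B) p h) :
    ¬ fills (B.edges p) (spicked p.other p ps) := by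
  intro hfl
  apply hne
  rw [ended_iff_player _ p p]
  refine Or.inl (fills_mono ?_ ?_ (st.pk4 ▸ hfl))
  · rw [gunion_edges]; exact Finset.subset_union_right
  · exact Finset.inter_subset_left

/-- If the union game has not ended, the simulated `A`-scoring game has not ended. -/
lemma noQend (st : St A B p σ n' h qs ps)
    (hens : ∀ h', sValid A p h' → sFollows p σ h' → sEnded A p h' →
      fills (A.edges p) (spicked p p h') ∧ passCount p h' ≤ (d : ℕ))
    (hne : ¬ ended (gunion A B) p h) : ¬ sEnded A p qs := by
  intro hend
  have hfl := (hens qs st.qv st.qf hend).1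
  apply hne
  rw [ended_iff_player _ p p]
  refine Or.inl (fills_mono ?_ ?_ (st.pk1 ▸ hfl))
  · rw [gunion_edges]; exact Finset.subset_union_left
  · exact Finset.inter_subset_left

end St

end MainDefs

section MainStep

variable {A B : Game} {p : Player} {tau : SHist → Option ℕ} {qs ps : SHist}

lemma dstep_odd_A {i x : ℕ} (hpar : i % 2 = 1) (hA : x ∈ A.V) :
    dstep A B p tau (qs, ps) (i, x) = (qs ++ [some x], ps) := by
  unfold dstep
  rw [if_neg (by omega : ¬ i % 2 = 0), if_pos hA]

lemma dstep_odd_B {i x : ℕ} (hpar : i % 2 = 1) (hA : x ∉ A.V) :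
    dstep A B p tau (qs, ps) (i, x) = (qs, ps ++ [some x]) := by
  unfold dstep
  rw [if_neg (by omega : ¬ i % 2 = 0), if_neg hA]

lemma dstep_even_q0 {i x : ℕ} (hpar : i % 2 = 0) (hq : qs.length % 2 = 0) :
    dstep A B p tau (qs, ps) (i, x) = (qs ++ [some x], ps) := by
  unfold dstep
  rw [if_pos hpar, if_pos hq]

lemma dstep_even_dead {i x : ℕ} (hpar : i % 2 = 0) (hq : ¬ qs.length % 2 = 0)
    (hdead : sEnded B p.other ps) :
    dstep A B p tau (qs, ps) (i, x) = (qs ++ [none, some x], ps) := by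
  unfold dstep
  rw [if_pos hpar, if_neg hq, if_pos hdead]

lemma dstep_even_some {i x w : ℕ} (hpar : i % 2 = 0) (hq : ¬ qs.length % 2 = 0)
    (hdead : ¬ sEnded B p.other ps) (htv : tau ps = some w) :
    dstep A B p tau (qs, ps) (i, x) = (qs, ps ++ [some x]) := by
  unfold dstep
  rw [if_pos hpar, if_neg hq, if_neg hdead, htv]

lemma dstep_even_none {i x : ℕ} (hpar : i % 2 = 0) (hq : ¬ qs.length % 2 = 0)
    (hdead : ¬ sEnded B p.other ps) (htv : tau ps = none) :
    dstep A B p tau (qs, ps) (i, x) = (qs ++ [none, some x], ps ++ [none]) := by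
  unfold dstep
  rw [if_pos hpar, if_neg hq, if_neg hdead, htv]

variable {σ : SHist → ℕ} {h : List ℕ}

lemma sigU_eval_q0 (hdec : decode A B p tau h = (qs, ps)) (hq : qs.length % 2 = 0) :
    sigU A B p σ tau h = σ qs := by
  unfold sigU
  rw [hdec]
  show (if qs.length % 2 = 0 then σ qs else _) = σ qs
  rw [if_pos hq]

lemma sigU_eval_dead (hdec : decode A B p tau h = (qs, ps)) (hq : ¬ qs.length % 2 = 0)
    (hdead : sEnded B p.other ps) :
    sigU A B p σ tau h = σ (qs ++ [none]) := by
  unfold sigU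
  rw [hdec]
  show (if qs.length % 2 = 0 then σ qs else _) = _
  rw [if_neg hq, if_pos hdead]

lemma sigU_eval_some {w : ℕ} (hdec : decode A B p tau h = (qs, ps))
    (hq : ¬ qs.length % 2 = 0) (hdead : ¬ sEnded B p.other ps) (htv : tau ps = some w) :
    sigU A B p σ tau h = w := by
  unfold sigU
  rw [hdec]
  show (if qs.length % 2 = 0 then σ qs else _) = _
  rw [if_neg hq, if_neg hdead, htv]

lemma sigU_eval_none (hdec : decode A B p tau h = (qs, ps))
    (hq : ¬ qs.length % 2 = 0) (hdead : ¬ sEnded B p.other ps) (htv : tau ps = none) :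
    sigU A B p σ tau h = σ (qs ++ [none]) := by
  unfold sigU
  rw [hdec]
  show (if qs.length % 2 = 0 then σ qs else _) = _
  rw [if_neg hq, if_neg hdead, htv]

end MainStep

section StepLemma

variable {A B : Game} {p : Player} {σ : SHist → ℕ} {tau : SHist → Option ℕ} {n' d : ℕ}

lemma St.step
    (hWB : WellFormed B) (hdisj : Disjoint A.V B.V)
    (hsleg : sLegal A p σ)
    (hens : ∀ h', sValid A p h' → sFollows p σ h' → sEnded A p h' →
      fills (A.edges p) (spicked p p h') ∧ passCount p h' ≤ d)
    (htau : ∀ ps', ps'.length % 2 = 1 → ¬ sEnded B p.other ps' →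
      ¬ ensureFrom B p.other n' ps' →
      (∀ y, tau ps' = some y → y ∈ B.V ∧ y ∉ allPicks ps') ∧
        ¬ ensureFrom B p.other n' (ps' ++ [tau ps']))
    {h : List ℕ} {x : ℕ} {qs ps : SHist}
    (hdec : decode A B p tau h = (qs, ps))
    (st : St A B p σ n' h qs ps)
    (hU : ValidHist (gunion A B) p (h ++ [x]))
    (hF : Follows p p (sigU A B p σ tau) (h ++ [x])) :
    St A B p σ n' (h ++ [x]) (decode A B p tau (h ++ [x])).1
      (decode A B p tau (h ++ [x])).2 := by
  obtain ⟨hVh, hxh, hxV, hneh⟩ := (ValidHist_snoc _ _ _ _).mp hU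
  obtain ⟨hFh, hFx⟩ := (Follows_snoc _ _ _ _ _).mp hF
  have nq : ¬ sEnded A p qs := st.noQend hens hneh
  have np' := st.noPfill' hWB hneh
  have np := st.noPfill hWB hneh
  have hqall := st.qs_allPicks
  have hpall := st.ps_allPicks
  have hxq : x ∉ allPicks qs := by
    intro hc
    have hc2 : x ∈ (allPicks qs).toFinset := List.mem_toFinset.mpr hc
    rw [hqall, Finset.mem_inter, List.mem_toFinset] at hc2
    exact hxh hc2.1
  have hxp : x ∉ allPicks ps := by
    intro hc
    have hc2 : x ∈ (allPicks ps).toFinset := List.mem_toFinset.mpr hc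
    rw [hpall, Finset.mem_inter, List.mem_toFinset] at hc2
    exact hxh hc2.1
  rcases Nat.mod_two_eq_zero_or_one h.length with hpar | hpar
  · -- player p just moved
    have hmp : mover p h.length = p := mover_self p hpar
    have hx_eq : x = sigU A B p σ tau h := hFx hmp
    rcases st.par0 hpar with ⟨hq0, hps⟩ | ⟨hq1, hp1⟩
    · -- state (even, even-or-dead): play σ qs in A
      have hmq : mover p qs.length = p := mover_self p hq0
      have hσl := hsleg qs st.qv st.qf nq hmq
      have hxσ : x = σ qs := by rw [hx_eq, sigU_eval_q0 hdec hq0]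
      have hxA : x ∈ A.V := by rw [hxσ]; exact hσl.1
      have hd' : decode A B p tau (h ++ [x]) = (qs ++ [some x], ps) := by
        rw [decode_snoc, hdec, dstep_even_q0 hpar hq0]
      rw [hd']
      refine ⟨?_, ?_, st.pv, ?_, ?_, ?_, ?_, ?_, ?_, ?_, st.W⟩
      · rw [sValid_snoc]
        refine ⟨st.qv, fun _ => by simp, nq, ?_⟩
        rintro y hy
        injection hy with hy
        subst hy
        exact ⟨hxA, hxq⟩
      · rw [sFollows_snoc]
        exact ⟨st.qf, fun _ => by rw [hxσ]⟩
      · intro _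
        refine ⟨by simp only [List.length_append, List.length_singleton]; omega, hps⟩
      · intro hc
        simp only [List.length_append, List.length_singleton] at hc
        omega
      · rw [spicked_snoc_some p p qs x hmq, picked_snoc, if_pos hmp, st.pk1,
          Finset.insert_inter_of_mem hxA]
      · rw [spicked_snoc_not_mover p p.other qs _ (by rw [hmq]; exact Player.ne_other p),
          picked_snoc, if_neg (by rw [hmp]; exact Player.ne_other p), st.pk2]
      · rw [picked_snoc, if_neg (by rw [hmp]; exact Player.ne_other p), st.pk3]
      · rw [picked_snoc, if_pos hmp, st.pk4, Finset.insert_inter_of_notMem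
          (Finset.disjoint_left.mp hdisj hxA)]
      · rw [passCount_snoc]
        simpa using st.sync
    · -- state (odd, odd)
      have hq1' : ¬ qs.length % 2 = 0 := by omega
      have hmps : mover p.other ps.length = p := by
        rw [mover_other p.other hp1, Player.other_other]
      by_cases hdead : sEnded B p.other ps
      · -- B-side dead: lazy pass then play σ (qs ++ [none])
        have hxσ : x = σ (qs ++ [none]) := by rw [hx_eq, sigU_eval_dead hdec hq1' hdead]
        have hd' : decode A B p tau (h ++ [x]) = (qs ++ [none, some x], ps) := by
          rw [decode_snoc, hdec, dstep_even_dead hpar hq1' hdead]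
        have hsplit : qs ++ [none, some x] = (qs ++ [none]) ++ [some x] := by simp
        have hqv1 : sValid A p (qs ++ [none]) := by
          rw [sValid_snoc]
          refine ⟨st.qv, ?_, nq, by simp⟩
          intro hc
          rw [mover_other p hq1] at hc
          exact absurd hc (Player.other_ne p)
        have hqf1 : sFollows p σ (qs ++ [none]) := by
          rw [sFollows_snoc]
          refine ⟨st.qf, ?_⟩
          intro hc
          rw [mover_other p hq1] at hc
          exact absurd hc (Player.other_ne p)
        have hne1 : ¬ sEnded A p (qs ++ [none]) := by rw [sEnded_snoc_none]; exact nq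
        have hm1' : mover p (qs ++ [none]).length = p := by
          apply mover_self
          simp only [List.length_append, List.length_singleton]
          omega
        have hσl := hsleg (qs ++ [none]) hqv1 hqf1 hne1 hm1'
        have hxA : x ∈ A.V := by rw [hxσ]; exact hσl.1
        have hallnone : allPicks (qs ++ [none]) = allPicks qs := by
          rw [allPicks_snoc]; simp
        rw [hd', hsplit]
        refine ⟨?_, ?_, st.pv, ?_, ?_, ?_, ?_, ?_, ?_, ?_, st.W⟩
        · rw [sValid_snoc]
          refine ⟨hqv1, fun _ => by simp, hne1, ?_⟩
          rintro y hy
          injection hy with hy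
          subst hy
          refine ⟨hxA, ?_⟩
          rw [hallnone]
          exact hxq
        · rw [sFollows_snoc]
          exact ⟨hqf1, fun _ => by rw [hxσ]⟩
        · intro _
          refine ⟨?_, Or.inr hdead⟩
          simp only [List.length_append, List.length_singleton]
          omega
        · intro hc
          simp only [List.length_append, List.length_singleton] at hc
          omega
        · rw [spicked_snoc_some p p (qs ++ [none]) x hm1', spicked_snoc_none,
            picked_snoc, if_pos hmp, st.pk1, Finset.insert_inter_of_mem hxA]
        · rw [spicked_snoc_not_mover p p.other (qs ++ [none]) _
            (by rw [hm1']; exact Player.ne_other p),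
            spicked_snoc_none, picked_snoc,
            if_neg (by rw [hmp]; exact Player.ne_other p), st.pk2]
        · rw [picked_snoc, if_neg (by rw [hmp]; exact Player.ne_other p), st.pk3]
        · rw [picked_snoc, if_pos hmp, st.pk4, Finset.insert_inter_of_notMem
            (Finset.disjoint_left.mp hdisj hxA)]
        · exact Or.inr hdead
      · -- B-side alive: consult tau
        obtain ⟨htleg, htW⟩ := htau ps hp1 hdead st.W
        cases hts : tau ps with
        | some w =>
          have hwleg := htleg w hts
          have hxw : x = w := by rw [hx_eq, sigU_eval_some hdec hq1' hdead hts]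
          have hxB : x ∈ B.V := by rw [hxw]; exact hwleg.1
          have hd' : decode A B p tau (h ++ [x]) = (qs, ps ++ [some x]) := by
            rw [decode_snoc, hdec, dstep_even_some hpar hq1' hdead hts]
          rw [hd']
          refine ⟨st.qv, st.qf, ?_, ?_, ?_, ?_, ?_, ?_, ?_, ?_, ?_⟩
          · rw [sValid_snoc]
            refine ⟨st.pv, fun _ => by simp, hdead, ?_⟩
            rintro y hy
            injection hy with hy
            subst hy
            refine ⟨hxB, hxp⟩
          · intro _
            refine ⟨hq1, Or.inl ?_⟩
            simp only [List.length_append, List.length_singleton]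
            omega
          · intro hc
            simp only [List.length_append, List.length_singleton] at hc
            omega
          · rw [picked_snoc, if_pos hmp, Finset.insert_inter_of_notMem
              (Finset.disjoint_right.mp hdisj hxB), st.pk1]
          · rw [picked_snoc, if_neg (by rw [hmp]; exact Player.ne_other p), st.pk2]
          · rw [spicked_snoc_not_mover p.other p.other ps _
              (by rw [hmps]; exact Player.ne_other p),
              picked_snoc, if_neg (by rw [hmp]; exact Player.ne_other p), st.pk3]
          · rw [spicked_snoc_some p.other p ps x hmps, picked_snoc, if_pos hmp,
              st.pk4, Finset.insert_inter_of_mem hxB]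
          · rcases st.sync with hs | hs
            · left
              rw [passCount_snoc]
              simpa using hs
            · exact absurd hs hdead
          · rw [hxw]
            rw [hts] at htW
            exact htW
        | none =>
          have hxσ : x = σ (qs ++ [none]) := by rw [hx_eq, sigU_eval_none hdec hq1' hdead hts]
          have hd' : decode A B p tau (h ++ [x]) = (qs ++ [none, some x], ps ++ [none]) := by
            rw [decode_snoc, hdec, dstep_even_none hpar hq1' hdead hts]
          have hsplit : qs ++ [none, some x] = (qs ++ [none]) ++ [some x] := by simp
          have hqv1 : sValid A p (qs ++ [none]) := by
            rw [sValid_snoc]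
            refine ⟨st.qv, ?_, nq, by simp⟩
            intro hc
            rw [mover_other p hq1] at hc
            exact absurd hc (Player.other_ne p)
          have hqf1 : sFollows p σ (qs ++ [none]) := by
            rw [sFollows_snoc]
            refine ⟨st.qf, ?_⟩
            intro hc
            rw [mover_other p hq1] at hc
            exact absurd hc (Player.other_ne p)
          have hne1 : ¬ sEnded A p (qs ++ [none]) := by rw [sEnded_snoc_none]; exact nq
          have hm1' : mover p (qs ++ [none]).length = p := by
            apply mover_self
            simp only [List.length_append, List.length_singleton]
            omega
          have hσl := hsleg (qs ++ [none]) hqv1 hqf1 hne1 hm1'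
          have hxA : x ∈ A.V := by rw [hxσ]; exact hσl.1
          have hallnone : allPicks (qs ++ [none]) = allPicks qs := by
            rw [allPicks_snoc]; simp
          rw [hd', hsplit]
          refine ⟨?_, ?_, ?_, ?_, ?_, ?_, ?_, ?_, ?_, ?_, ?_⟩
          · rw [sValid_snoc]
            refine ⟨hqv1, fun _ => by simp, hne1, ?_⟩
            rintro y hy
            injection hy with hy
            subst hy
            refine ⟨hxA, ?_⟩
            rw [hallnone]
            exact hxq
          · rw [sFollows_snoc]
            exact ⟨hqf1, fun _ => by rw [hxσ]⟩
          · rw [sValid_snoc]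
            refine ⟨st.pv, ?_, hdead, by simp⟩
            intro hc
            rw [hmps] at hc
            exact absurd hc (Player.ne_other p)
          · intro _
            refine ⟨?_, Or.inl ?_⟩
            · simp only [List.length_append, List.length_singleton]
              omega
            · simp only [List.length_append, List.length_singleton]
              omega
          · intro hc
            simp only [List.length_append, List.length_singleton] at hc
            omega
          · rw [spicked_snoc_some p p (qs ++ [none]) x hm1', spicked_snoc_none,
              picked_snoc, if_pos hmp, st.pk1, Finset.insert_inter_of_mem hxA]
          · rw [spicked_snoc_not_mover p p.other (qs ++ [none]) _
              (by rw [hm1']; exact Player.ne_other p),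
              spicked_snoc_none, picked_snoc,
              if_neg (by rw [hmp]; exact Player.ne_other p), st.pk2]
          · rw [spicked_snoc_none, picked_snoc,
              if_neg (by rw [hmp]; exact Player.ne_other p), st.pk3]
          · rw [spicked_snoc_none, picked_snoc, if_pos hmp, st.pk4,
              Finset.insert_inter_of_notMem (Finset.disjoint_left.mp hdisj hxA)]
          · rcases st.sync with hs | hs
            · left
              rw [passCount_snoc, passCount_snoc, passCount_snoc]
              have e1 : ¬ (mover p (qs ++ [none]).length = p.other ∧
                  (some x : Option ℕ) = none) := by simp
              have e2 : mover p qs.length = p.other ∧ (none : Option ℕ) = none :=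
                ⟨mover_other p hq1, rfl⟩
              have e3 : mover p.other ps.length = p.other.other ∧
                  (none : Option ℕ) = none := ⟨by rw [Player.other_other]; exact hmps, rfl⟩
              rw [if_neg e1, if_pos e2, if_pos e3]
              omega
            · exact absurd hs hdead
          · rw [hts] at htW
            exact htW
  · -- the opponent just moved
    have hmp' : mover p h.length = p.other := mover_other p hpar
    obtain ⟨hq1, hps⟩ := st.par1 hpar
    have hq1' : ¬ qs.length % 2 = 0 := by omega
    have hmqo : mover p qs.length = p.other := mover_other p hq1
    by_cases hxA : x ∈ A.V
    · -- move in A: feed qs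
      have hd' : decode A B p tau (h ++ [x]) = (qs ++ [some x], ps) := by
        rw [decode_snoc, hdec, dstep_odd_A hpar hxA]
      rw [hd']
      refine ⟨?_, ?_, st.pv, ?_, ?_, ?_, ?_, ?_, ?_, ?_, st.W⟩
      · rw [sValid_snoc]
        refine ⟨st.qv, fun _ => by simp, nq, ?_⟩
        rintro y hy
        injection hy with hy
        subst hy
        exact ⟨hxA, hxq⟩
      · rw [sFollows_snoc]
        refine ⟨st.qf, ?_⟩
        intro hc
        rw [hmqo] at hc
        exact absurd hc (Player.other_ne p)
      · intro hc
        simp only [List.length_append, List.length_singleton] at hc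
        omega
      · intro _
        refine Or.inl ⟨?_, hps⟩
        simp only [List.length_append, List.length_singleton]
        omega
      · rw [spicked_snoc_not_mover p p qs _ (by rw [hmqo]; exact Player.other_ne p),
          picked_snoc, if_neg (by rw [hmp']; exact Player.other_ne p), st.pk1]
      · rw [spicked_snoc_some p p.other qs x hmqo, picked_snoc, if_pos hmp', st.pk2,
          Finset.insert_inter_of_mem hxA]
      · rw [picked_snoc, if_pos hmp', st.pk3, Finset.insert_inter_of_notMem
          (Finset.disjoint_left.mp hdisj hxA)]
      · rw [picked_snoc, if_neg (by rw [hmp']; exact Player.other_ne p), st.pk4]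
      · rw [passCount_snoc]
        simpa using st.sync
    · -- move in B: feed ps
      have hxB : x ∈ B.V := by
        rcases Finset.mem_union.mp hxV with hc | hc
        · exact absurd hc hxA
        · exact hc
      have hpal : ¬ sEnded B p.other ps := by
        intro hdead
        rcases hdead with hf | hf | hf
        · exact np' hf
        · rw [Player.other_other] at hf
          exact np hf
        · have hc2 : x ∈ (allPicks ps).toFinset := hf hxB
          rw [hpall, Finset.mem_inter, List.mem_toFinset] at hc2
          exact hxh hc2.1
      have hp0 : ps.length % 2 = 0 := by
        rcases hps with h0 | hdead
        · exact h0
        · exact absurd hdead hpal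
      have hmps0 : mover p.other ps.length = p.other := mover_self p.other hp0
      have hd' : decode A B p tau (h ++ [x]) = (qs, ps ++ [some x]) := by
        rw [decode_snoc, hdec, dstep_odd_B hpar hxA]
      rw [hd']
      refine ⟨st.qv, st.qf, ?_, ?_, ?_, ?_, ?_, ?_, ?_, ?_, ?_⟩
      · rw [sValid_snoc]
        refine ⟨st.pv, fun _ => by simp, hpal, ?_⟩
        rintro y hy
        injection hy with hy
        subst hy
        exact ⟨hxB, hxp⟩
      · intro hc
        simp only [List.length_append, List.length_singleton] at hc
        omega
      · intro _
        right
        refine ⟨hq1, ?_⟩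
        simp only [List.length_append, List.length_singleton]
        omega
      · rw [picked_snoc, if_neg (by rw [hmp']; exact Player.other_ne p), st.pk1]
      · rw [picked_snoc, if_pos hmp', st.pk2, Finset.insert_inter_of_notMem
          (Finset.disjoint_right.mp hdisj hxB)]
      · rw [spicked_snoc_some p.other p.other ps x hmps0, picked_snoc, if_pos hmp',
          st.pk3, Finset.insert_inter_of_mem hxB]
      · rw [spicked_snoc_not_mover p.other p ps _
          (by rw [hmps0]; exact Player.other_ne p),
          picked_snoc, if_neg (by rw [hmp']; exact Player.other_ne p), st.pk4]
      · rcases st.sync with hs | hs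
        · left
          rw [passCount_snoc]
          simpa using hs
        · exact absurd hs hpal
      · exact ensureFrom_move B p.other n' ps hmps0 hpal x hxB hxp st.W

end StepLemma

section MainAssembly

variable {A B : Game} {p : Player} {σ : SHist → ℕ} {tau : SHist → Option ℕ} {n' d : ℕ}

lemma wf_edges {q : Player} (hW : WellFormed A) {e : Finset ℕ} (he : e ∈ A.edges q) :
    e ⊆ A.V ∧ e.Nonempty := by
  cases q with
  | L => exact hW.1 e he
  | R => exact hW.2 e he

lemma main_inv
    (hWB : WellFormed B) (hdisj : Disjoint A.V B.V)
    (hsleg : sLegal A p σ)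
    (hens : ∀ h', sValid A p h' → sFollows p σ h' → sEnded A p h' →
      fills (A.edges p) (spicked p p h') ∧ passCount p h' ≤ d)
    (htau : ∀ ps', ps'.length % 2 = 1 → ¬ sEnded B p.other ps' →
      ¬ ensureFrom B p.other n' ps' →
      (∀ y, tau ps' = some y → y ∈ B.V ∧ y ∉ allPicks ps') ∧
        ¬ ensureFrom B p.other n' (ps' ++ [tau ps']))
    (hE0 : ¬ ensureFrom B p.other n' []) :
    ∀ h, ValidHist (gunion A B) p h → Follows p p (sigU A B p σ tau) h →
      St A B p σ n' h (decode A B p tau h).1 (decode A B p tau h).2 := by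
  intro h
  induction h using List.reverseRecOn with
  | nil =>
    intro _ _
    rw [decode_nil]
    refine ⟨?_, ?_, ?_, ?_, ?_, ?_, ?_, ?_, ?_, ?_, hE0⟩
    · exact ⟨by simp [allPicks], by simp [allPicks], by simp, by simp⟩
    · intro k hk; simp at hk
    · exact ⟨by simp [allPicks], by simp [allPicks], by simp, by simp⟩
    · intro hc; simp at hc
    · intro _; exact Or.inl ⟨rfl, Or.inl rfl⟩
    · ext y; simp [mem_spicked, mem_picked]
    · ext y; simp [mem_spicked, mem_picked]
    · ext y; simp [mem_spicked, mem_picked]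
    · ext y; simp [mem_spicked, mem_picked]
    · exact Or.inl rfl
  | append_singleton h x ih =>
    intro hv hf
    have hvh := ValidHist_prefix _ _ h (List.prefix_append _ _) hv
    have hfh := Follows_prefix _ _ _ h (List.prefix_append _ _) hf
    exact St.step hWB hdisj hsleg hens htau rfl (ih hvh hfh) hv hf

lemma wins_gunion (A B : Game) (p : Player)
    (hWA : WellFormed A) (hWB : WellFormed B) (hdisj : Disjoint A.V B.V)
    (d n' : ℕ) (hσE : canEnsure A p d) (hdn : d ≤ n' + 1)
    (hE0 : ¬ ensureFrom B p.other n' []) :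
    WinsAs (gunion A B) p p := by
  obtain ⟨σ, hsleg, hens⟩ := hσE
  have htau_ex : ∀ ps : SHist, ∃ a : Option ℕ,
      ps.length % 2 = 1 → ¬ sEnded B p.other ps → ¬ ensureFrom B p.other n' ps →
      (∀ y, a = some y → y ∈ B.V ∧ y ∉ allPicks ps) ∧
        ¬ ensureFrom B p.other n' (ps ++ [a]) := by
    intro ps
    by_cases hc : ps.length % 2 = 1 ∧ ¬ sEnded B p.other ps ∧
        ¬ ensureFrom B p.other n' ps
    · obtain ⟨h1, h2, h3⟩ := hc
      obtain ⟨a, ha1, ha2⟩ :=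
        ensureFrom_pasting B p.other n' ps (mover_other p.other h1) h2 h3
      exact ⟨a, fun _ _ _ => ⟨ha1, ha2⟩⟩
    · exact ⟨none, fun h1 h2 h3 => absurd ⟨h1, h2, h3⟩ hc⟩
  choose tau htau using htau_ex
  have hinv := main_inv (σ := σ) (tau := tau) hWB hdisj hsleg hens htau hE0
  refine ⟨sigU A B p σ tau, ?_, ?_⟩
  · -- legality
    intro h hv hf hne _ hm
    have st := hinv h hv hf
    set qs := (decode A B p tau h).1 with hqs
    set ps := (decode A B p tau h).2 with hps
    have hdec : decode A B p tau h = (qs, ps) := rfl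
    have nq := st.noQend hens hne
    have hqall := st.qs_allPicks
    have hpall := st.ps_allPicks
    have notin_of_A : ∀ y, y ∈ A.V → y ∉ allPicks qs → y ∉ h := by
      intro y hyA hyq hyh
      apply hyq
      have : y ∈ (allPicks qs).toFinset := by
        rw [hqall, Finset.mem_inter, List.mem_toFinset]
        exact ⟨hyh, hyA⟩
      exact List.mem_toFinset.mp this
    have notin_of_B : ∀ y, y ∈ B.V → y ∉ allPicks ps → y ∉ h := by
      intro y hyB hyp hyh
      apply hyp
      have : y ∈ (allPicks ps).toFinset := by
        rw [hpall, Finset.mem_inter, List.mem_toFinset]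
        exact ⟨hyh, hyB⟩
      exact List.mem_toFinset.mp this
    rcases Nat.mod_two_eq_zero_or_one qs.length with hq0 | hq1
    · rw [sigU_eval_q0 hdec hq0]
      have hσl := hsleg qs st.qv st.qf nq (mover_self p hq0)
      exact ⟨Finset.mem_union_left _ hσl.1, notin_of_A _ hσl.1 hσl.2⟩
    · have hpar0 : h.length % 2 = 0 := by rw [mover_eq_self_iff] at hm; exact hm
      rcases st.par0 hpar0 with ⟨hq0, _⟩ | ⟨_, hp1⟩
      · omega
      · have hmid : sValid A p (qs ++ [none]) ∧ sFollows p σ (qs ++ [none]) ∧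
            ¬ sEnded A p (qs ++ [none]) ∧ mover p (qs ++ [none]).length = p := by
          refine ⟨?_, ?_, ?_, ?_⟩
          · rw [sValid_snoc]
            refine ⟨st.qv, ?_, nq, by simp⟩
            intro hc
            rw [mover_other p hq1] at hc
            exact absurd hc (Player.other_ne p)
          · rw [sFollows_snoc]
            refine ⟨st.qf, ?_⟩
            intro hc
            rw [mover_other p hq1] at hc
            exact absurd hc (Player.other_ne p)
          · rw [sEnded_snoc_none]; exact nq
          · apply mover_self
            simp only [List.length_append, List.length_singleton]
            omega
        have hσl1 := hsleg (qs ++ [none]) hmid.1 hmid.2.1 hmid.2.2.1 hmid.2.2.2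
        have hallnone : allPicks (qs ++ [none]) = allPicks qs := by
          rw [allPicks_snoc]; simp
        by_cases hdead : sEnded B p.other ps
        · rw [sigU_eval_dead hdec (by omega) hdead]
          refine ⟨Finset.mem_union_left _ hσl1.1, ?_⟩
          apply notin_of_A _ hσl1.1
          rw [← hallnone]
          exact hσl1.2
        · obtain ⟨htleg, _⟩ := htau ps hp1 hdead st.W
          cases hts : tau ps with
          | some w =>
            rw [sigU_eval_some hdec (by omega) hdead hts]
            have hw := htleg w hts
            exact ⟨Finset.mem_union_right _ hw.1, notin_of_B _ hw.1 hw.2⟩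
          | none =>
            rw [sigU_eval_none hdec (by omega) hdead hts]
            refine ⟨Finset.mem_union_left _ hσl1.1, ?_⟩
            apply notin_of_A _ hσl1.1
            rw [← hallnone]
            exact hσl1.2
  · -- the guarantee
    intro h hv hf hcomp
    rcases List.eq_nil_or_concat h with rfl | ⟨h', x, hcat⟩
    · -- empty complete history: degenerate
      exfalso
      have hemp : ∀ q, picked p q ([] : List ℕ) = ∅ := by
        intro q; ext y; simp [mem_picked]
      rcases hcomp with hend | hlen0
      · rcases hend with ⟨e, he, hsub⟩ | ⟨e, he, hsub⟩
        · rcases Finset.mem_union.mp he with heA | heB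
          · obtain ⟨y, hy⟩ := (hWA.1 e heA).2
            have := hsub hy
            rw [hemp] at this
            exact absurd this (Finset.notMem_empty y)
          · obtain ⟨y, hy⟩ := (hWB.1 e heB).2
            have := hsub hy
            rw [hemp] at this
            exact absurd this (Finset.notMem_empty y)
        · rcases Finset.mem_union.mp he with heA | heB
          · obtain ⟨y, hy⟩ := (hWA.2 e heA).2
            have := hsub hy
            rw [hemp] at this
            exact absurd this (Finset.notMem_empty y)
          · obtain ⟨y, hy⟩ := (hWB.2 e heB).2
            have := hsub hy
            rw [hemp] at this
            exact absurd this (Finset.notMem_empty y)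
      · -- the whole board is empty
        have hAempty : A.V = ∅ := by
          have h1 : A.V ⊆ A.V ∪ B.V := Finset.subset_union_left
          have h2 : (A.V ∪ B.V).card = 0 := hlen0.symm
          rw [Finset.card_eq_zero] at h2
          rw [h2] at h1
          exact Finset.subset_empty.mp h1
        have hsend : sEnded A p [] := by
          right; right
          rw [hAempty]
          exact Finset.empty_subset _
        have hvnil : sValid A p ([] : SHist) :=
          ⟨by simp [allPicks], by simp [allPicks], by simp, by simp⟩
        have hfnil : sFollows p σ ([] : SHist) := by intro k hk; simp at hk
        have hfill := (hens [] hvnil hfnil hsend).1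
        obtain ⟨e, he, hsub⟩ := hfill
        obtain ⟨y, hy⟩ := (wf_edges hWA he).2
        have := hsub hy
        rw [mem_spicked] at this
        obtain ⟨i, hi, _⟩ := this
        simp at hi
    · -- h = h' ++ [x]
      rw [List.concat_eq_append] at hcat
      subst hcat
      obtain ⟨hVh', hxh, hxV, hneh'⟩ := (ValidHist_snoc _ _ _ _).mp hv
      have hfh' := Follows_prefix _ _ _ h' (List.prefix_append _ _) hf
      have st := hinv h' hVh' hfh'
      have stx := St.step hWB hdisj hsleg hens htau rfl st hv hf
      have goal_of_Aside :
          sEnded A p (decode A B p tau (h' ++ [x])).1 →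
          fills ((gunion A B).edges p) (picked p p (h' ++ [x])) := by
        intro hsend
        have hfill := (hens _ stx.qv stx.qf hsend).1
        refine fills_mono ?_ ?_ hfill
        · rw [gunion_edges]; exact Finset.subset_union_left
        · rw [stx.pk1]; exact Finset.inter_subset_left
      rcases hcomp with hend | hlenfull
      · rw [ended_iff_player _ p p] at hend
        rcases hend with hgoal | ⟨e, he, hsub⟩
        · exact hgoal
        · rw [gunion_edges] at he
          rcases Finset.mem_union.mp he with heA | heB
          · -- opponent filled inside A: impossible by the scoring guarantee for σ
            apply goal_of_Aside
            right; left
            refine ⟨e, heA, ?_⟩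
            rw [stx.pk2]
            exact Finset.subset_inter hsub (wf_edges hWA heA).1
          · -- opponent filled inside B: contradiction via pass counts
            exfalso
            have heB' : e ⊆ picked p p.other (h' ++ [x]) ∩ B.V :=
              Finset.subset_inter hsub (wf_edges hWB heB).1
            have nq := st.noQend hens hneh'
            have np' := st.noPfill' hWB hneh'
            have hpall := st.ps_allPicks
            -- the last move must be an opponent move in B
            rcases Nat.mod_two_eq_zero_or_one h'.length with hpar | hpar
            · -- p moved last: opponent picks unchanged
              apply np'
              refine ⟨e, heB, ?_⟩
              rw [st.pk3]
              rw [picked_snoc, if_neg (by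
                rw [mover_self p hpar]; exact Player.ne_other p)] at heB'
              exact heB'
            · obtain ⟨hq1, hps⟩ := st.par1 hpar
              have hmp' : mover p h'.length = p.other := mover_other p hpar
              by_cases hxA : x ∈ A.V
              · apply np'
                refine ⟨e, heB, ?_⟩
                rw [st.pk3]
                rw [picked_snoc, if_pos hmp', Finset.insert_inter_of_notMem
                  (Finset.disjoint_left.mp hdisj hxA)] at heB'
                exact heB'
              · have hxB : x ∈ B.V := by
                  rcases Finset.mem_union.mp hxV with hc | hc
                  · exact absurd hc hxA
                  · exact hc
                have hxp : x ∉ allPicks (decode A B p tau h').2 := by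
                  intro hcin
                  have hc2 : x ∈ (allPicks (decode A B p tau h').2).toFinset :=
                    List.mem_toFinset.mpr hcin
                  rw [hpall, Finset.mem_inter, List.mem_toFinset] at hc2
                  exact hxh hc2.1
                have np := st.noPfill hWB hneh'
                have hpal : ¬ sEnded B p.other (decode A B p tau h').2 := by
                  intro hdead
                  rcases hdead with hfx | hfx | hfx
                  · exact np' hfx
                  · rw [Player.other_other] at hfx
                    exact np hfx
                  · have hc2 : x ∈ (allPicks (decode A B p tau h').2).toFinset := hfx hxB
                    rw [hpall, Finset.mem_inter, List.mem_toFinset] at hc2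
                    exact hxh hc2.1
                have hp0 : (decode A B p tau h').2.length % 2 = 0 := by
                  rcases hps with h0 | hdead
                  · exact h0
                  · exact absurd hdead hpal
                have hmps0 : mover p.other (decode A B p tau h').2.length = p.other :=
                  mover_self p.other hp0
                have hd' : decode A B p tau (h' ++ [x]) =
                    ((decode A B p tau h').1, (decode A B p tau h').2 ++ [some x]) := by
                  rw [decode_snoc, ← Prod.mk.eta (p := decode A B p tau h'),
                    dstep_odd_B hpar hxA]
                -- the new fill
                have hfillB : fills (B.edges p.other)
                    (spicked p.other p.other ((decode A B p tau h').2 ++ [some x])) := by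
                  refine ⟨e, heB, ?_⟩
                  have := stx.pk3
                  rw [hd'] at this
                  rw [this]
                  exact heB'
                have hsendB : sEnded B p.other ((decode A B p tau h').2 ++ [some x]) :=
                  Or.inl hfillB
                -- pass count lower bound
                have hπlow : ¬ passCount p.other ((decode A B p tau h').2 ++ [some x]) ≤ n' := by
                  intro hle
                  exact st.W (ensureFrom_of_fill B p.other n' _ x hmps0 hpal hxB hxp
                    hsendB hfillB hle)
                rw [passCount_snoc] at hπlow
                simp only [and_false, if_false, reduceCtorEq] at hπlow
                -- pass count upper bound via the A-side
                have hsync : passCount p (decode A B p tau h').1 =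
                    passCount p.other (decode A B p tau h').2 := by
                  rcases st.sync with hs | hs
                  · exact hs
                  · exact absurd hs hpal
                have hup := passCount_succ_le_of_ensure A p σ d hsleg hens
                  (decode A B p tau h').1 st.qv st.qf nq (mover_other p hq1)
                omega
      · -- the board is full
        apply goal_of_Aside
        right; right
        have hndp : (h' ++ [x]).Nodup := hv.1
        have hsubV : (h' ++ [x]).toFinset ⊆ (gunion A B).V := by
          intro y hy
          exact hv.2.1 y (List.mem_toFinset.mp hy)
        have hcardeq : (h' ++ [x]).toFinset = (gunion A B).V := by
          apply Finset.eq_of_subset_of_card_le hsubV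
          rw [List.toFinset_card_of_nodup hndp, hlenfull]
        have hAsub : A.V ⊆ (h' ++ [x]).toFinset := by
          rw [hcardeq]
          exact Finset.subset_union_left
        rw [stx.qs_allPicks]
        intro y hy
        rw [Finset.mem_inter]
        exact ⟨hAsub hy, hy⟩

end MainAssembly

section FinalAssembly

lemma wf_gunion {A B : Game} (hWA : WellFormed A) (hWB : WellFormed B) :
    WellFormed (gunion A B) := by
  constructor
  · intro e he
    rcases Finset.mem_union.mp he with hc | hc
    · exact ⟨(hWA.1 e hc).1.trans Finset.subset_union_left, (hWA.1 e hc).2⟩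
    · exact ⟨(hWB.1 e hc).1.trans Finset.subset_union_right, (hWB.1 e hc).2⟩
  · intro e he
    rcases Finset.mem_union.mp he with hc | hc
    · exact ⟨(hWA.2 e hc).1.trans Finset.subset_union_left, (hWA.2 e hc).2⟩
    · exact ⟨(hWB.2 e hc).1.trans Finset.subset_union_right, (hWB.2 e hc).2⟩

/-- If `p` can ensure score `0`, then `p` wins immediately with their first move;
in particular `p` wins the disjoint union with any other game. -/
lemma wins_of_ensure_zero (A B : Game) (p : Player)
    (hWA : WellFormed A) (hWB : WellFormed B) (hσE : canEnsure A p 0) :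
    WinsAs (gunion A B) p p := by
  obtain ⟨σ, hsleg, hens⟩ := hσE
  set u := σ [] with hu
  have hvnil : sValid A p ([] : SHist) :=
    ⟨by simp [allPicks], by simp [allPicks], by simp, by simp⟩
  have hfnil : sFollows p σ ([] : SHist) := by intro k hk; simp at hk
  have hne0 : ¬ sEnded A p [] := by
    intro hend
    obtain ⟨e, he, hsub⟩ := (hens [] hvnil hfnil hend).1
    obtain ⟨y, hy⟩ := (wf_edges hWA he).2
    have := hsub hy
    rw [mem_spicked] at this
    obtain ⟨i, hi, _⟩ := this
    simp at hi
  have hσl := hsleg [] hvnil hfnil hne0 (mover_self p rfl)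
  have huA : u ∈ A.V := hσl.1
  have hv1 : sValid A p [some u] := by
    have : sValid A p (([] : SHist) ++ [some u]) := by
      rw [sValid_snoc]
      refine ⟨hvnil, fun _ => by simp, hne0, ?_⟩
      rintro y hy
      injection hy with hy
      subst hy
      exact ⟨huA, by simp [allPicks]⟩
    simpa using this
  have hf1 : sFollows p σ [some u] := by
    have : sFollows p σ (([] : SHist) ++ [some u]) := by
      rw [sFollows_snoc]
      exact ⟨hfnil, fun _ => by rw [hu]⟩
    simpa using this
  have hend1 : sEnded A p [some u] := by
    by_contra hne1
    have := passCount_succ_le_of_ensure A p σ 0 hsleg hens [some u] hv1 hf1 hne1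
      (mover_other p (by norm_num))
    omega
  have hfill1 := (hens [some u] hv1 hf1 hend1).1
  have hsp : spicked p p [some u] = {u} := by
    ext y
    simp only [mem_spicked, List.length_singleton, Finset.mem_singleton]
    constructor
    · rintro ⟨i, hi, hm, hg⟩
      have hi0 : i = 0 := by omega
      subst hi0
      have : ([some u] : SHist).getD 0 none = some u := rfl
      rw [this] at hg
      injection hg with hg
      exact hg.symm
    · rintro rfl
      exact ⟨0, by omega, mover_self p rfl, rfl⟩
  rw [hsp] at hfill1
  obtain ⟨e, he, hesub⟩ := hfill1
  refine ⟨fun _ => u, ?_, ?_⟩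
  · intro h hv hf hne _ _
    rcases List.eq_nil_or_concat h with rfl | ⟨h', x, hcat⟩
    · exact ⟨Finset.mem_union_left _ huA, by simp⟩
    · exfalso
      apply hne
      rw [List.concat_eq_append] at hcat
      subst hcat
      have hu_mem : u ∈ picked p p (h' ++ [x]) := by
        rw [mem_picked]
        refine ⟨0, by simp, mover_self p rfl, ?_⟩
        have := hf 0 (by simp) (mover_self p rfl)
        rw [this]
      rw [ended_iff_player _ p p]
      left
      refine ⟨e, ?_, ?_⟩
      · rw [gunion_edges]
        exact Finset.mem_union_left _ he
      · intro y hy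
        have := hesub hy
        rw [Finset.mem_singleton] at this
        subst this
        exact hu_mem
  · intro h hv hf hcomp
    rcases List.eq_nil_or_concat h with rfl | ⟨h', x, hcat⟩
    · exfalso
      rcases hcomp with hend | hlen0
      · rcases hend with ⟨e', he', hsub'⟩ | ⟨e', he', hsub'⟩
        · obtain ⟨y, hy⟩ := ((wf_gunion hWA hWB).1 e' he').2
          have hmem := hsub' hy
          rw [mem_picked] at hmem
          obtain ⟨i, hi, _⟩ := hmem
          simp at hi
        · obtain ⟨y, hy⟩ := ((wf_gunion hWA hWB).2 e' he').2
          have hmem := hsub' hy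
          rw [mem_picked] at hmem
          obtain ⟨i, hi, _⟩ := hmem
          simp at hi
      · have : u ∈ (gunion A B).V := Finset.mem_union_left _ huA
        have hcard := Finset.card_pos.mpr ⟨u, this⟩
        simp only [List.length_nil] at hlen0
        omega
    · rw [List.concat_eq_append] at hcat
      subst hcat
      have hu_mem : u ∈ picked p p (h' ++ [x]) := by
        rw [mem_picked]
        refine ⟨0, by simp, mover_self p rfl, ?_⟩
        have := hf 0 (by simp) (mover_self p rfl)
        rw [this]
      refine ⟨e, ?_, ?_⟩
      · rw [gunion_edges]
        exact Finset.mem_union_left _ he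
      · intro y hy
        have := hesub hy
        rw [Finset.mem_singleton] at this
        subst this
        exact hu_mem

end FinalAssembly

/-- If Left wins `G` as first player and Right wins `G'` as first player, then:
if the Left-delay of `G` is at most the Right-delay of `G'`, Left has a winning strategy
on `G ∪ G'` as first player, and if the Right-delay of `G'` is at most the Left-delay of
`G`, Right has a winning strategy on `G ∪ G'` as first player. -/
theorem union_delay (G G' : Game) (hG : WellFormed G) (hG' : WellFormed G')
    (hdisj : Disjoint G.V G'.V)
    (hL : WinsAs G .L .L) (hR : WinsAs G' .R .R) :
    (delay G .L ≤ delay G' .R → WinsAs (gunion G G') .L .L) ∧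
    (delay G' .R ≤ delay G .L → WinsAs (gunion G G') .R .R) := by
  have hGE : canEnsure G .L (G.V.card) := canEnsure_of_winsAs G .L hL
  have hGE' : canEnsure G' .R (G'.V.card) := canEnsure_of_winsAs G' .R hR
  have hSne : {n : ℕ | canEnsure G .L n}.Nonempty := ⟨_, hGE⟩
  have hSne' : {n : ℕ | canEnsure G' .R n}.Nonempty := ⟨_, hGE'⟩
  have hdmem : canEnsure G .L (delay G .L) := Nat.sInf_mem hSne
  have hdmem' : canEnsure G' .R (delay G' .R) := Nat.sInf_mem hSne'
  constructor
  · intro hdd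
    by_cases hz : delay G' .R = 0
    · have hd0 : delay G .L = 0 := by omega
      exact wins_of_ensure_zero G G' .L hG hG' (hd0 ▸ hdmem)
    · have hn' : ¬ canEnsure G' .R (delay G' .R - 1) := by
        intro hc
        have := Nat.sInf_le (show _ ∈ {n : ℕ | canEnsure G' .R n} from hc)
        have h2 : delay G' .R ≤ delay G' .R - 1 := this
        omega
      have hE0 : ¬ ensureFrom G' (Player.L).other (delay G' .R - 1) [] := by
        intro hEF
        exact hn' (canEnsure_of_ensureFrom_nil hEF)
      exact wins_gunion G G' .L hG hG' hdisj (delay G .L) (delay G' .R - 1) hdmem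
        (by omega) hE0
  · intro hdd
    have hcomm : gunion G' G = gunion G G' := by
      unfold gunion
      congr 1
      · exact Finset.union_comm _ _
      · exact Finset.union_comm _ _
      · exact Finset.union_comm _ _
    rw [← hcomm]
    by_cases hz : delay G .L = 0
    · have hd0 : delay G' .R = 0 := by omega
      exact wins_of_ensure_zero G' G .R hG' hG (hd0 ▸ hdmem')
    · have hn' : ¬ canEnsure G .L (delay G .L - 1) := by
        intro hc
        have := Nat.sInf_le (show _ ∈ {n : ℕ | canEnsure G .L n} from hc)
        have h2 : delay G .L ≤ delay G .L - 1 := this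
        omega
      have hE0 : ¬ ensureFrom G (Player.R).other (delay G .L - 1) [] := by
        intro hEF
        exact hn' (canEnsure_of_ensureFrom_nil hEF)
      exact wins_gunion G' G .R hG' hG hdisj.symm (delay G' .R) (delay G .L - 1)
        hdmem' (by omega) hE0
end APG
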